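/- arXiv:1507.07786 — 5 statements merged into one kernel-verified Lean document; each statement's English description precedes it below -/
import Mathlib

section
/- Let a ∈ W^{1,1}(0,1) with a(x₀)=0 for some x₀ ∈ (0,1), a>0 on [0,1]\{x₀}, and (x−x₀)a'(x) ≤ K₁ a(x) a.e. in [0,1] with K₁ ∈ (0,1). Then for every γ > K₁, lim_{x→x₀} |x−x₀|^γ / a(x) = 0. -/
open Set MeasureTheory intervalIntegral Filter

lemma gron (K u v : ℝ) (hK : 0 ≤ K) (hu : 0 < u) (huv : u ≤ v) (b b' : ℝ → ℝ)
    (hcont : ContinuousOn b (Icc u v))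
    (hb'int : IntervalIntegrable b' volume u v)
    (hFTC : ∀ t ∈ Icc u v, b t = b u + ∫ s in u..t, b' s)
    (hdeg : ∀ᵐ s ∂(volume.restrict (Ioo u v)), s * b' s ≤ K * b s) :
    b v ≤ b u * (v / u) ^ K := by
  rcases eq_or_lt_of_le huv with rfl | huv
  · simp [div_self hu.ne']
  -- extension of b
  set bext : ℝ → ℝ := fun s => b (min v (max u s)) with hbext_def
  have hbext_cont : Continuous bext := by
    apply hcont.comp_continuous
    · exact continuous_const.min (continuous_const.max continuous_id)
    · intro s
      constructor
      · exact le_min huv.le (le_max_left _ _)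
      · exact min_le_left _ _
  have hbext_eq : ∀ s ∈ Icc u v, bext s = b s := by
    intro s hs
    simp only [hbext_def]
    rw [max_eq_right hs.1, min_eq_right hs.2]
  set g : ℝ → ℝ := fun s => K * bext s / s with hg_def
  have hgcont : ContinuousOn g {(0:ℝ)}ᶜ := by
    exact (continuous_const.mul hbext_cont).continuousOn.div continuousOn_id
      (fun s hs => hs)
  have hsub : ∀ t ∈ Icc u v, Icc u t ⊆ {(0:ℝ)}ᶜ := by
    intro t ht s hs
    exact (lt_of_lt_of_le hu hs.1).ne'
  have hgint : ∀ t ∈ Icc u v, IntervalIntegrable g volume u t := by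
    intro t ht
    apply ContinuousOn.intervalIntegrable
    rw [uIcc_of_le ht.1]
    exact hgcont.mono (hsub t ht)
  set W : ℝ → ℝ := fun t => b u + ∫ s in u..t, g s with hW_def
  -- a.e. inequality b' ≤ g
  have hdeg' : ∀ᵐ s ∂volume, s ∈ Ioo u v → s * b' s ≤ K * b s :=
    (ae_restrict_iff' measurableSet_Ioo).mp hdeg
  have hne : ∀ w : ℝ, ∀ᵐ s : ℝ ∂volume, s ≠ w := by
    intro w
    rw [ae_iff]
    have h0 : {s : ℝ | ¬ s ≠ w} = {w} := by ext s; simp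
    rw [h0]
    exact Real.volume_singleton
  have hne_u := hne u
  have hne_v := hne v
  have hb_le_W : ∀ t ∈ Icc u v, b t ≤ W t := by
    intro t ht
    rw [hFTC t ht, hW_def]
    have hmono : (∫ s in u..t, b' s) ≤ ∫ s in u..t, g s := by
      have hae : ∀ᵐ s ∂volume.restrict (Icc u t), b' s ≤ g s := by
        rw [ae_restrict_iff' measurableSet_Icc]
        filter_upwards [hdeg', hne_u, hne_v] with s hs hsu hsv hsIcc
        have hsIoo : s ∈ Ioo u v := by
          constructor
          · exact lt_of_le_of_ne hsIcc.1 (Ne.symm hsu)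
          · exact lt_of_le_of_ne (le_trans hsIcc.2 ht.2) hsv
        have hspos : 0 < s := lt_trans hu hsIoo.1
        have h2 := hs hsIoo
        rw [hg_def]
        simp only
        rw [hbext_eq s ⟨hsIcc.1, le_trans hsIcc.2 ht.2⟩]
        rw [div_eq_mul_inv, ← mul_comm (s⁻¹)]
        rw [le_inv_mul_iff₀ hspos]
        linarith [h2]
      exact intervalIntegral.integral_mono_ae_restrict ht.1
        (hb'int.mono_set (by rw [uIcc_of_le ht.1, uIcc_of_le huv.le]; exact Icc_subset_Icc le_rfl ht.2))
        (hgint t ht) hae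
    simp only
    linarith
  -- derivative of W
  have hWd : ∀ t ∈ Ioo u v, HasDerivAt W (g t) t := by
    intro t ht
    have htne : t ∈ ({(0:ℝ)}ᶜ : Set ℝ) := (lt_trans hu ht.1).ne'
    have hopen : IsOpen ({(0:ℝ)}ᶜ : Set ℝ) := isOpen_compl_singleton
    have hca : ContinuousAt g t := hgcont.continuousAt (hopen.mem_nhds htne)
    have := intervalIntegral.integral_hasDerivAt_right
      (hgint t (Ioo_subset_Icc_self ht))
      (hgcont.stronglyMeasurableAtFilter hopen t htne)
      hca
    exact this.const_add (b u)
  -- W continuous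
  have hWc : ContinuousOn W (Icc u v) := by
    apply ContinuousOn.add continuousOn_const
    have : IntegrableOn g (uIcc u v) volume := by
      rw [uIcc_of_le huv.le]
      exact (hgcont.mono (hsub v (right_mem_Icc.mpr huv.le))).integrableOn_Icc
    have := intervalIntegral.continuousOn_primitive_interval this
    rwa [uIcc_of_le huv.le] at this
  -- q antitone
  set q : ℝ → ℝ := fun t => W t * t ^ (-K) with hq_def
  have hqd : ∀ t ∈ Ioo u v, HasDerivAt q (g t * t ^ (-K) + W t * (-K * t ^ (-K - 1))) t := by
    intro t ht
    have htpos : 0 < t := lt_trans hu ht.1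
    have h2 : HasDerivAt (fun x : ℝ => x ^ (-K)) (-K * t ^ (-K - 1)) t :=
      Real.hasDerivAt_rpow_const (Or.inl htpos.ne')
    exact (hWd t ht).mul h2
  have hq_nonpos : ∀ t ∈ Ioo u v, g t * t ^ (-K) + W t * (-K * t ^ (-K - 1)) ≤ 0 := by
    intro t ht
    have htpos : 0 < t := lt_trans hu ht.1
    have hbW := hb_le_W t (Ioo_subset_Icc_self ht)
    have hbe := hbext_eq t (Ioo_subset_Icc_self ht)
    have hrw : t * t ^ (-K - 1) = t ^ (-K) := by
      nth_rewrite 1 [← Real.rpow_one t]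
      rw [← Real.rpow_add htpos]
      ring_nf
    have : g t * t ^ (-K) + W t * (-K * t ^ (-K - 1))
        = t ^ (-K - 1) * (K * (b t - W t)) := by
      rw [hg_def]
      simp only
      rw [hbe, ← hrw]
      field_simp
      ring
    rw [this]
    apply mul_nonpos_of_nonneg_of_nonpos (Real.rpow_nonneg htpos.le _)
    apply mul_nonpos_of_nonneg_of_nonpos hK
    linarith
  have hq_anti : AntitoneOn q (Icc u v) := by
    apply antitoneOn_of_deriv_nonpos (convex_Icc u v)
    · apply hWc.mul
      apply ContinuousOn.rpow_const continuousOn_id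
      intro t ht
      exact Or.inl (lt_of_lt_of_le hu ht.1).ne'
    · intro t ht
      rw [interior_Icc] at ht
      exact ((hqd t ht).differentiableAt).differentiableWithinAt
    · intro t ht
      rw [interior_Icc] at ht
      rw [(hqd t ht).deriv]
      exact hq_nonpos t ht
  have hmem_u : u ∈ Icc u v := left_mem_Icc.mpr huv.le
  have hmem_v : v ∈ Icc u v := right_mem_Icc.mpr huv.le
  have hquv : q v ≤ q u := hq_anti hmem_u hmem_v huv.le
  have hWu : W u = b u := by simp [hW_def]
  have hvpos : 0 < v := lt_trans hu huv
  -- conclude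
  have hWv : b v ≤ W v := hb_le_W v hmem_v
  rw [hq_def] at hquv
  simp only [hWu] at hquv
  have hvK : (0:ℝ) < v ^ K := Real.rpow_pos_of_pos hvpos K
  have key : W v ≤ b u * u ^ (-K) * v ^ K := by
    have := mul_le_mul_of_nonneg_right hquv hvK.le
    calc W v = W v * (v ^ (-K) * v ^ K) := by
              rw [← Real.rpow_add hvpos]
              simp
      _ = W v * v ^ (-K) * v ^ K := by ring
      _ ≤ b u * u ^ (-K) * v ^ K := this
  have hfin : b u * u ^ (-K) * v ^ K = b u * (v / u) ^ K := by
    rw [Real.div_rpow hvpos.le hu.le, Real.rpow_neg hu.le]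
    ring
  linarith [hfin ▸ key, hWv]

lemma rpow_helper (A B u v K : ℝ) (hu : 0 < u) (hv : 0 < v)
    (h : A ≤ B * (v / u) ^ K) : A / v ^ K * u ^ K ≤ B := by
  have huK : (0:ℝ) < u ^ K := Real.rpow_pos_of_pos hu K
  have hvK : (0:ℝ) < v ^ K := Real.rpow_pos_of_pos hv K
  have hdr : (v / u) ^ K = v ^ K / u ^ K := Real.div_rpow hv.le hu.le K
  rw [hdr] at h
  rw [div_mul_eq_mul_div, div_le_iff₀ hvK]
  calc A * u ^ K ≤ B * (v ^ K / u ^ K) * u ^ K :=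
        mul_le_mul_of_nonneg_right h huK.le
    _ = B * v ^ K := by field_simp

/-- Lemma 2.1(1), limit: under the weak degeneracy condition with `K₁ ∈ (0,1)`,
for every `γ > K₁` one has `|x-x₀|^γ / a(x) → 0` as `x → x₀`. -/
theorem stmt_1 (x₀ K₁ : ℝ) (hx₀ : x₀ ∈ Ioo (0:ℝ) 1) (hK₁ : K₁ ∈ Ioo (0:ℝ) 1)
    (a a' : ℝ → ℝ)
    (ha_cont : ContinuousOn a (Icc 0 1))
    (ha_deriv : ∀ᵐ x ∂(volume.restrict (Ioo (0:ℝ) 1)), HasDerivAt a (a' x) x)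
    (ha'_int : IntegrableOn a' (Icc 0 1))
    (ha_FTC : ∀ x ∈ Icc (0:ℝ) 1, a x = a 0 + ∫ t in (0:ℝ)..x, a' t)
    (ha_zero : a x₀ = 0)
    (ha_pos : ∀ x ∈ Icc (0:ℝ) 1, x ≠ x₀ → 0 < a x)
    (hdeg : ∀ᵐ x ∂(volume.restrict (Ioo (0:ℝ) 1)), (x - x₀) * a' x ≤ K₁ * a x) :
    ∀ γ : ℝ, K₁ < γ →
      Tendsto (fun x => |x - x₀| ^ γ / a x) (nhdsWithin x₀ (Icc (0:ℝ) 1 \ {x₀})) (nhds 0) := by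
  obtain ⟨hx0, hx1⟩ := hx₀
  obtain ⟨hK0, hKlt1⟩ := hK₁
  have hdegG : ∀ᵐ x ∂(volume : Measure ℝ), x ∈ Ioo (0:ℝ) 1 → (x - x₀) * a' x ≤ K₁ * a x :=
    (ae_restrict_iff' measurableSet_Ioo).mp hdeg
  have ha'II : ∀ p q : ℝ, p ∈ Icc (0:ℝ) 1 → q ∈ Icc (0:ℝ) 1 →
      IntervalIntegrable a' volume p q := by
    intro p q hp hq
    apply IntegrableOn.intervalIntegrable
    apply ha'_int.mono_set
    intro z hz
    rcases Set.mem_uIcc.mp hz with ⟨h1, h2⟩ | ⟨h1, h2⟩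
    · exact ⟨le_trans hp.1 h1, le_trans h2 hq.2⟩
    · exact ⟨le_trans hq.1 h1, le_trans h2 hp.2⟩
  have h01 : (0:ℝ) ∈ Icc (0:ℝ) 1 := ⟨le_rfl, zero_le_one⟩
  have h11 : (1:ℝ) ∈ Icc (0:ℝ) 1 := ⟨zero_le_one, le_rfl⟩
  have hFTC2 : ∀ p q : ℝ, p ∈ Icc (0:ℝ) 1 → q ∈ Icc (0:ℝ) 1 →
      a q = a p + ∫ t in p..q, a' t := by
    intro p q hp hq
    have h1 := ha_FTC p hp
    have h2 := ha_FTC q hq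
    have hadj := intervalIntegral.integral_add_adjacent_intervals
      (ha'II 0 p h01 hp) (ha'II p q hp hq)
    linarith
  set c : ℝ := min (a 0 / x₀ ^ K₁) (a 1 / (1 - x₀) ^ K₁) with hc_def
  have hx₀K : (0:ℝ) < x₀ ^ K₁ := Real.rpow_pos_of_pos hx0 _
  have h1x₀K : (0:ℝ) < (1 - x₀) ^ K₁ := Real.rpow_pos_of_pos (by linarith) _
  have ha0 : 0 < a 0 := ha_pos 0 h01 (ne_of_lt hx0)
  have ha1 : 0 < a 1 := ha_pos 1 h11 (ne_of_gt hx1)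
  have hcpos : 0 < c := lt_min (div_pos ha0 hx₀K) (div_pos ha1 h1x₀K)
  -- key lower bound
  have key : ∀ x ∈ Icc (0:ℝ) 1, x ≠ x₀ → c * |x - x₀| ^ K₁ ≤ a x := by
    intro x hx hxne
    rcases lt_or_gt_of_ne hxne with hlt | hgt
    · -- x < x₀ : use b t = a (x₀ - t) on [x₀ - x, x₀]
      have habs : |x - x₀| = x₀ - x := by rw [abs_of_neg (by linarith)]; ring
      have hcontb : ContinuousOn (fun t => a (x₀ - t)) (Icc (x₀ - x) x₀) := by
        apply ha_cont.comp (continuous_const.sub continuous_id).continuousOn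
        intro t ht
        show x₀ - t ∈ Icc (0:ℝ) 1
        exact ⟨by linarith [ht.2], by linarith [ht.1, hlt, hx1]⟩
      have hintb : IntervalIntegrable (fun t => -a' (x₀ - t)) volume (x₀ - x) x₀ := by
        have := ((ha'II x 0 hx h01).comp_sub_left x₀).neg
        exact (by simpa using this : IntervalIntegrable (-fun x => a' (x₀ - x)) volume (x₀ - x) x₀)
      have hftcb : ∀ t ∈ Icc (x₀ - x) x₀,
          a (x₀ - t) = a (x₀ - (x₀ - x)) + ∫ s in (x₀ - x)..t, -a' (x₀ - s) := by
        intro t ht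
        have hmem : x₀ - t ∈ Icc (0:ℝ) 1 :=
          ⟨by linarith [ht.2], by linarith [ht.1, hlt, hx1]⟩
        have hrw : (∫ s in (x₀ - x)..t, -a' (x₀ - s))
            = -(∫ s in (x₀ - t)..(x₀ - (x₀ - x)), a' s) := by
          rw [intervalIntegral.integral_neg, intervalIntegral.integral_comp_sub_left a' x₀]
        have hxx : x₀ - (x₀ - x) = x := by ring
        rw [hrw, hxx]
        have := hFTC2 (x₀ - t) x hmem hx
        linarith
      have hdegb : ∀ᵐ s ∂(volume.restrict (Ioo (x₀ - x) x₀)),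
          s * -a' (x₀ - s) ≤ K₁ * a (x₀ - s) := by
        rw [ae_restrict_iff' measurableSet_Ioo]
        have htr : ∀ᵐ s : ℝ ∂volume,
            (x₀ - s ∈ Ioo (0:ℝ) 1 → (x₀ - s - x₀) * a' (x₀ - s) ≤ K₁ * a (x₀ - s)) :=
          (Measure.measurePreserving_sub_left volume x₀).quasiMeasurePreserving.ae hdegG
        filter_upwards [htr] with s hs hsIoo
        have hmem : x₀ - s ∈ Ioo (0:ℝ) 1 :=
          ⟨by linarith [hsIoo.2], by linarith [hsIoo.1, hlt, hx1]⟩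
        have h2 : s * -a' (x₀ - s) = (x₀ - s - x₀) * a' (x₀ - s) := by ring
        rw [h2]
        exact hs hmem
      have hgr := gron K₁ (x₀ - x) x₀ hK0.le (by linarith) (by linarith [hx.1])
        (fun t => a (x₀ - t)) (fun t => -a' (x₀ - t)) hcontb hintb hftcb hdegb
      have e1 : x₀ - x₀ = (0:ℝ) := by ring
      have e2 : x₀ - (x₀ - x) = x := by ring
      simp only [e1, e2] at hgr
      have hh := rpow_helper (a 0) (a x) (x₀ - x) x₀ K₁ (by linarith) hx0 hgr
      rw [habs]
      calc c * (x₀ - x) ^ K₁ ≤ a 0 / x₀ ^ K₁ * (x₀ - x) ^ K₁ :=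
            mul_le_mul_of_nonneg_right (min_le_left _ _)
              (Real.rpow_nonneg (by linarith) _)
        _ ≤ a x := hh
    · -- x > x₀ : use b t = a (x₀ + t) on [x - x₀, 1 - x₀]
      have habs : |x - x₀| = x - x₀ := abs_of_pos (by linarith)
      have hcontb : ContinuousOn (fun t => a (x₀ + t)) (Icc (x - x₀) (1 - x₀)) := by
        apply ha_cont.comp (continuous_const.add continuous_id).continuousOn
        intro t ht
        show x₀ + t ∈ Icc (0:ℝ) 1
        exact ⟨by linarith [ht.1, hgt, hx0], by linarith [ht.2]⟩
      have hintb : IntervalIntegrable (fun t => a' (x₀ + t)) volume (x - x₀) (1 - x₀) := by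
        have := (ha'II x 1 hx h11).comp_add_left x₀
        simpa using this
      have hftcb : ∀ t ∈ Icc (x - x₀) (1 - x₀),
          a (x₀ + t) = a (x₀ + (x - x₀)) + ∫ s in (x - x₀)..t, a' (x₀ + s) := by
        intro t ht
        have hmem : x₀ + t ∈ Icc (0:ℝ) 1 :=
          ⟨by linarith [ht.1, hgt, hx0], by linarith [ht.2]⟩
        have hrw : (∫ s in (x - x₀)..t, a' (x₀ + s))
            = ∫ s in (x₀ + (x - x₀))..(x₀ + t), a' s :=
          intervalIntegral.integral_comp_add_left a' x₀
        have hxx : x₀ + (x - x₀) = x := by ring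
        rw [hrw, hxx]
        have := hFTC2 x (x₀ + t) hx hmem
        linarith
      have hdegb : ∀ᵐ s ∂(volume.restrict (Ioo (x - x₀) (1 - x₀))),
          s * a' (x₀ + s) ≤ K₁ * a (x₀ + s) := by
        rw [ae_restrict_iff' measurableSet_Ioo]
        have htr : ∀ᵐ s : ℝ ∂volume,
            (x₀ + s ∈ Ioo (0:ℝ) 1 → (x₀ + s - x₀) * a' (x₀ + s) ≤ K₁ * a (x₀ + s)) :=
          (measurePreserving_add_left volume x₀).quasiMeasurePreserving.ae hdegG
        filter_upwards [htr] with s hs hsIoo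
        have hmem : x₀ + s ∈ Ioo (0:ℝ) 1 :=
          ⟨by linarith [hsIoo.1, hgt, hx0], by linarith [hsIoo.2]⟩
        have h2 : s * a' (x₀ + s) = (x₀ + s - x₀) * a' (x₀ + s) := by ring
        rw [h2]
        exact hs hmem
      have hgr := gron K₁ (x - x₀) (1 - x₀) hK0.le (by linarith) (by linarith [hx.2])
        (fun t => a (x₀ + t)) (fun t => a' (x₀ + t)) hcontb hintb hftcb hdegb
      have e1 : x₀ + (1 - x₀) = (1:ℝ) := by ring
      have e2 : x₀ + (x - x₀) = x := by ring
      simp only [e1, e2] at hgr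
      have hh := rpow_helper (a 1) (a x) (x - x₀) (1 - x₀) K₁ (by linarith) (by linarith) hgr
      rw [habs]
      calc c * (x - x₀) ^ K₁ ≤ a 1 / (1 - x₀) ^ K₁ * (x - x₀) ^ K₁ :=
            mul_le_mul_of_nonneg_right (min_le_right _ _)
              (Real.rpow_nonneg (by linarith) _)
        _ ≤ a x := hh
  -- squeeze
  intro γ hγ
  have hγK : (0:ℝ) < γ - K₁ := by linarith
  have hbound : ∀ᶠ x in nhdsWithin x₀ (Icc (0:ℝ) 1 \ {x₀}),
      0 ≤ |x - x₀| ^ γ / a x ∧ |x - x₀| ^ γ / a x ≤ |x - x₀| ^ (γ - K₁) / c := by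
    filter_upwards [self_mem_nhdsWithin] with x hx
    obtain ⟨hxI, hxne⟩ := hx
    have hxne' : x ≠ x₀ := hxne
    have hax := ha_pos x hxI hxne'
    have habs : 0 < |x - x₀| := abs_pos.mpr (sub_ne_zero.mpr hxne')
    have hlow := key x hxI hxne'
    have hKpow : (0:ℝ) < |x - x₀| ^ K₁ := Real.rpow_pos_of_pos habs _
    have hγpow : (0:ℝ) ≤ |x - x₀| ^ γ := Real.rpow_nonneg (abs_nonneg _) _
    constructor
    · positivity
    · have h1 : |x - x₀| ^ γ / a x ≤ |x - x₀| ^ γ / (c * |x - x₀| ^ K₁) := by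
        gcongr
      have h2 : |x - x₀| ^ γ / (c * |x - x₀| ^ K₁) = |x - x₀| ^ (γ - K₁) / c := by
        rw [Real.rpow_sub habs, div_div, mul_comm]
      linarith [h2 ▸ h1]
  have h0 : Tendsto (fun x => |x - x₀|) (nhdsWithin x₀ (Icc (0:ℝ) 1 \ {x₀})) (nhds 0) := by
    have h1 : Tendsto (fun x : ℝ => |x - x₀|) (nhds x₀) (nhds 0) := by
      have hco : Continuous (fun x : ℝ => |x - x₀|) :=
        (continuous_sub_right x₀).abs
      have := hco.tendsto x₀
      simpa using this
    exact h1.mono_left nhdsWithin_le_nhds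
  have hrhs : Tendsto (fun x => |x - x₀| ^ (γ - K₁) / c)
      (nhdsWithin x₀ (Icc (0:ℝ) 1 \ {x₀})) (nhds 0) := by
    have hcont0 : ContinuousAt (fun y : ℝ => y ^ (γ - K₁)) 0 :=
      Real.continuousAt_rpow_const 0 _ (Or.inr hγK.le)
    have h2 : Tendsto (fun x => |x - x₀| ^ (γ - K₁))
        (nhdsWithin x₀ (Icc (0:ℝ) 1 \ {x₀})) (nhds 0) := by
      have := hcont0.tendsto.comp h0
      simpa [Function.comp_def, Real.zero_rpow (ne_of_gt hγK)] using this
    have := h2.div_const c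
    simpa using this
  exact tendsto_of_tendsto_of_tendsto_of_le_of_le' tendsto_const_nhds hrhs
    (hbound.mono fun x h => h.1) (hbound.mono fun x h => h.2)
end

section
/- Let a ∈ W^{1,1}(0,1) with a(x₀)=0 for some x₀ ∈ (0,1), a>0 on [0,1]\{x₀}, and (x−x₀)a'(x) ≤ K₁ a(x) a.e. with K₁ ∈ (0,1). Then 1/a ∈ L¹(0,1). -/
open Set MeasureTheory intervalIntegral

lemma gronwall_aux (p y z K : ℝ) (hpy : p < y) (hyz : y ≤ z) (hK : 0 < K)
    (f : ℝ → ℝ) (hf : ContinuousOn f (Icc y z))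
    (hineq : ∀ x ∈ Icc y z, f x ≤ f y + K * ∫ t in y..x, f t / (t - p)) :
    f z ≤ f y * ((z - p) / (y - p)) ^ K := by
  set g : ℝ → ℝ := fun t => f t / (t - p) with hg_def
  have hsub : ∀ x ∈ Icc y z, (0:ℝ) < x - p := fun x hx => by
    have := hx.1; linarith
  have hg_cont : ContinuousOn g (Icc y z) := by
    apply hf.div (continuousOn_id.sub continuousOn_const)
    intro x hx
    exact ne_of_gt (hsub x hx)
  have hg_int : ∀ x ∈ Icc y z, IntervalIntegrable g volume y x := by
    intro x hx
    apply ContinuousOn.intervalIntegrable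
    apply hg_cont.mono
    rw [uIcc_of_le hx.1]
    exact Icc_subset_Icc le_rfl hx.2
  set u : ℝ → ℝ := fun x => f y + K * ∫ t in y..x, g t with hu_def
  have hu_cont : ContinuousOn u (Icc y z) := by
    apply continuousOn_const.add (continuousOn_const.mul ?_)
    have huIcc : uIcc y z = Icc y z := uIcc_of_le hyz
    have hint : IntegrableOn g (uIcc y z) volume := by
      rw [huIcc]; exact hg_cont.integrableOn_compact isCompact_Icc
    have := continuousOn_primitive_interval (μ := volume) (f := g) (a := y) (b := z) hint
    rwa [huIcc] at this
  have hfu : ∀ x ∈ Icc y z, f x ≤ u x := hineq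
  have hu_deriv : ∀ x ∈ Ioo y z, HasDerivAt u (K * g x) x := by
    intro x hx
    have hmem : Icc y z ∈ nhds x := Icc_mem_nhds hx.1 hx.2
    have hca : ContinuousAt g x := hg_cont.continuousAt hmem
    have hmeas : StronglyMeasurableAtFilter g (nhds x) volume :=
      ⟨Icc y z, hmem, (hg_cont.aestronglyMeasurable measurableSet_Icc)⟩
    have := integral_hasDerivAt_right (hg_int x (Ioo_subset_Icc_self hx)) hmeas hca
    exact (this.const_mul K).const_add (f y)
  set v : ℝ → ℝ := fun x => u x * (x - p) ^ (-K) with hv_def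
  have hrpow_deriv : ∀ x ∈ Ioo y z, HasDerivAt (fun x => (x - p) ^ (-K))
      (-K * (x - p) ^ (-K - 1)) x := by
    intro x hx
    have h1 : HasDerivAt (fun x : ℝ => x - p) 1 x := (hasDerivAt_id x).sub_const p
    have := h1.rpow_const (p := -K) (Or.inl (ne_of_gt (hsub x (Ioo_subset_Icc_self hx))))
    simpa [mul_comm] using this
  have hv_deriv : ∀ x ∈ Ioo y z, HasDerivAt v
      (K * g x * (x - p) ^ (-K) + u x * (-K * (x - p) ^ (-K - 1))) x := by
    intro x hx
    exact (hu_deriv x hx).mul (hrpow_deriv x hx)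
  have hv_deriv_nonpos : ∀ x ∈ Ioo y z,
      K * g x * (x - p) ^ (-K) + u x * (-K * (x - p) ^ (-K - 1)) ≤ 0 := by
    intro x hx
    have hxp : (0:ℝ) < x - p := hsub x (Ioo_subset_Icc_self hx)
    have h1 : (x - p) ^ (-K) = (x - p) ^ (-K - 1) * (x - p) := by
      rw [Real.rpow_sub hxp, Real.rpow_one]
      field_simp
    have h2 : K * g x * (x - p) ^ (-K) = K * f x * (x - p) ^ (-K - 1) := by
      rw [h1, hg_def]
      field_simp
    rw [h2]
    have hfux := hfu x (Ioo_subset_Icc_self hx)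
    have hpow_pos : (0:ℝ) < (x - p) ^ (-K - 1) := Real.rpow_pos_of_pos hxp _
    nlinarith [mul_le_mul_of_nonneg_left hfux (mul_pos hK hpow_pos).le]
  have hv_anti : AntitoneOn v (Icc y z) := by
    apply antitoneOn_of_deriv_nonpos (convex_Icc y z)
    · apply hu_cont.mul
      apply ContinuousOn.rpow_const (continuousOn_id.sub continuousOn_const)
      intro x hx
      exact Or.inl (ne_of_gt (hsub x hx))
    · intro x hx
      rw [interior_Icc] at hx
      exact ((hv_deriv x hx).differentiableAt).differentiableWithinAt
    · intro x hx
      rw [interior_Icc] at hx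
      rw [(hv_deriv x hx).deriv]
      exact hv_deriv_nonpos x hx
  have hvzy : v z ≤ v y := hv_anti (left_mem_Icc.mpr hyz) (right_mem_Icc.mpr hyz) hyz
  have huy : u y = f y := by simp [hu_def]
  have hyp : (0:ℝ) < y - p := by linarith
  have hzp : (0:ℝ) < z - p := by linarith
  have hfz : f z ≤ u z := hfu z (right_mem_Icc.mpr hyz)
  have key : u z * (z - p) ^ (-K) ≤ f y * (y - p) ^ (-K) := by
    have := hvzy
    simp only [hv_def, huy] at this
    exact this
  have hzpow : (0:ℝ) < (z - p) ^ K := Real.rpow_pos_of_pos hzp _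
  have hexp : ((z - p) / (y - p)) ^ K = (z - p) ^ K * (y - p) ^ (-K) := by
    rw [Real.div_rpow hzp.le hyp.le, Real.rpow_neg hyp.le, div_eq_mul_inv]
  rw [hexp, ← mul_assoc]
  have h3 : u z = u z * (z - p) ^ (-K) * (z - p) ^ K := by
    rw [mul_assoc, ← Real.rpow_add hzp]
    simp
  calc f z ≤ u z := hfz
    _ = u z * (z - p) ^ (-K) * (z - p) ^ K := h3
    _ ≤ f y * (y - p) ^ (-K) * (z - p) ^ K := by
        apply mul_le_mul_of_nonneg_right key hzpow.le
    _ = f y * (z - p) ^ K * (y - p) ^ (-K) := by ring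

/-- Lemma 2.1(2): under the weak degeneracy condition with `K₁ ∈ (0,1)`,
`1/a ∈ L¹(0,1)`. -/
theorem stmt_2 (x₀ K₁ : ℝ) (hx₀ : x₀ ∈ Ioo (0:ℝ) 1) (hK₁ : K₁ ∈ Ioo (0:ℝ) 1)
    (a a' : ℝ → ℝ)
    (ha_cont : ContinuousOn a (Icc 0 1))
    (ha_deriv : ∀ᵐ x ∂(volume.restrict (Ioo (0:ℝ) 1)), HasDerivAt a (a' x) x)
    (ha'_int : IntegrableOn a' (Icc 0 1))
    (ha_FTC : ∀ x ∈ Icc (0:ℝ) 1, a x = a 0 + ∫ t in (0:ℝ)..x, a' t)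
    (ha_zero : a x₀ = 0)
    (ha_pos : ∀ x ∈ Icc (0:ℝ) 1, x ≠ x₀ → 0 < a x)
    (hdeg : ∀ᵐ x ∂(volume.restrict (Ioo (0:ℝ) 1)), (x - x₀) * a' x ≤ K₁ * a x) :
    IntegrableOn (fun x => 1 / a x) (Ioo (0:ℝ) 1) := by
  obtain ⟨hx₀0, hx₀1⟩ := hx₀
  obtain ⟨hK0, hK1⟩ := hK₁
  have hint : ∀ u v : ℝ, 0 ≤ u → v ≤ 1 → u ≤ v → IntervalIntegrable a' volume u v := by
    intro u v hu hv huv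
    apply (ha'_int.mono_set ?_).intervalIntegrable
    rw [uIcc_of_le huv]
    exact Icc_subset_Icc hu hv
  have hFTC2 : ∀ u v : ℝ, 0 ≤ u → v ≤ 1 → u ≤ v → a v = a u + ∫ t in u..v, a' t := by
    intro u v hu hv huv
    have h1 := ha_FTC u ⟨hu, le_trans huv hv⟩
    have h2 := ha_FTC v ⟨le_trans hu huv, hv⟩
    have hadd : (∫ t in (0:ℝ)..u, a' t) + ∫ t in u..v, a' t = ∫ t in (0:ℝ)..v, a' t :=
      integral_add_adjacent_intervals (hint 0 u le_rfl (le_trans huv hv) hu)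
        (hint u v hu hv huv)
    rw [h1, h2, ← hadd]
    ring
  have hdeg' : ∀ᵐ t ∂(volume : Measure ℝ), t ∈ Ioo (0:ℝ) 1 → (t - x₀) * a' t ≤ K₁ * a t :=
    (ae_restrict_iff' measurableSet_Ioo).mp hdeg
  have hne1 : ∀ᵐ t ∂(volume : Measure ℝ), t ≠ (1:ℝ) := by
    refine ae_iff.mpr ?_
    have h : {t : ℝ | ¬t ≠ 1} = {1} := by ext t; simp
    rw [h]
    exact measure_singleton 1
  have hne0 : ∀ᵐ t ∂(volume : Measure ℝ), t ≠ (0:ℝ) := by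
    refine ae_iff.mpr ?_
    have h : {t : ℝ | ¬t ≠ 0} = {0} := by ext t; simp
    rw [h]
    exact measure_singleton 0
  -- right-side lower bound
  have hbR : ∀ w ∈ Ioc x₀ (1:ℝ), a 1 ≤ a w * ((1 - x₀) / (w - x₀)) ^ K₁ := by
    intro w hw
    have hw1 : x₀ < w := hw.1
    have hw2 : w ≤ 1 := hw.2
    have hsub1 : Icc w 1 ⊆ Icc (0:ℝ) 1 := Icc_subset_Icc (by linarith) le_rfl
    have key := gronwall_aux x₀ w 1 K₁ hw1 hw2 hK0 a (ha_cont.mono hsub1) ?_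
    · simpa using key
    intro x hx
    have hx1 : w ≤ x := hx.1
    have hx2 : x ≤ 1 := hx.2
    have hcontg : ContinuousOn (fun t => K₁ * (a t / (t - x₀))) (Icc w x) := by
      apply continuousOn_const.mul
      apply ContinuousOn.div (ha_cont.mono (Icc_subset_Icc (by linarith) hx2))
        ((continuous_sub_right x₀).continuousOn)
      intro t ht
      have h1 : x₀ < t := by linarith [ht.1]
      exact sub_ne_zero.mpr (ne_of_gt h1)
    have hIg : IntervalIntegrable (fun t => K₁ * (a t / (t - x₀))) volume w x := by
      apply ContinuousOn.intervalIntegrable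
      rwa [uIcc_of_le hx1]
    have hae : ∀ᵐ t ∂(volume.restrict (Icc w x)), a' t ≤ K₁ * (a t / (t - x₀)) := by
      have h1 : ∀ᵐ t ∂(volume.restrict (Icc w x)),
          t ∈ Ioo (0:ℝ) 1 → (t - x₀) * a' t ≤ K₁ * a t := ae_restrict_of_ae hdeg'
      have h2 : ∀ᵐ t ∂(volume.restrict (Icc w x)), t ∈ Icc w x :=
        ae_restrict_mem measurableSet_Icc
      have h3 : ∀ᵐ t ∂(volume.restrict (Icc w x)), t ≠ (1:ℝ) := ae_restrict_of_ae hne1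
      filter_upwards [h1, h2, h3] with t ht1 ht2 ht3
      have htlt1 : t < 1 := lt_of_le_of_ne (le_trans ht2.2 hx2) ht3
      have ht0 : 0 < t := by linarith [ht2.1]
      have htx : 0 < t - x₀ := by linarith [ht2.1]
      have hd := ht1 ⟨ht0, htlt1⟩
      rw [← mul_div_assoc, le_div_iff₀ htx]
      linarith [mul_comm (a' t) (t - x₀)]
    have hmono := integral_mono_ae_restrict hx1
      (hint w x (by linarith) hx2 hx1) hIg hae
    rw [intervalIntegral.integral_const_mul] at hmono
    rw [hFTC2 w x (by linarith) hx2 hx1]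
    linarith
  -- left-side lower bound
  have hbL : ∀ w ∈ Ico (0:ℝ) x₀, a 0 ≤ a w * (x₀ / (x₀ - w)) ^ K₁ := by
    intro w hw
    have hw1 : 0 ≤ w := hw.1
    have hw2 : w < x₀ := hw.2
    set f : ℝ → ℝ := fun s => a (x₀ - s) with hf_def
    have hmaps : ∀ s ∈ Icc (x₀ - w) x₀, x₀ - s ∈ Icc (0:ℝ) 1 := by
      intro s hs
      constructor
      · linarith [hs.2]
      · linarith [hs.1]
    have hf_cont : ContinuousOn f (Icc (x₀ - w) x₀) :=
      ha_cont.comp ((continuous_const.sub continuous_id).continuousOn) hmaps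
    have key := gronwall_aux 0 (x₀ - w) x₀ K₁ (by linarith) (by linarith) hK0 f hf_cont ?_
    · have h1 : f x₀ = a 0 := by simp [hf_def]
      have h2 : f (x₀ - w) = a w := by simp [hf_def]
      rw [h1, h2] at key
      simpa using key
    intro x hx
    have hx1 : x₀ - w ≤ x := hx.1
    have hx2 : x ≤ x₀ := hx.2
    have h2 : f (x₀ - w) = a w := by simp [hf_def]
    rw [h2]
    have htrans : (∫ t in (x₀ - w)..x, f t / (t - 0)) =
        ∫ s in (x₀ - x)..w, a s / (x₀ - s) := by
      have h := intervalIntegral.integral_comp_sub_left (a := x₀ - w) (b := x)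
        (fun s => a s / (x₀ - s)) x₀
      simp only [sub_sub_cancel] at h
      rw [← h]
      congr 1
      funext t
      simp [hf_def]
    rw [htrans]
    have hx0le : 0 ≤ x₀ - x := by linarith
    have hxw : x₀ - x ≤ w := by linarith
    have hFTC3 := hFTC2 (x₀ - x) w hx0le (by linarith) hxw
    have hfx : f x = a w - ∫ s in (x₀ - x)..w, a' s := by
      rw [hf_def]
      simp only
      rw [hFTC3]
      ring
    rw [hfx]
    have hcontg : ContinuousOn (fun s => K₁ * (a s / (x₀ - s))) (Icc (x₀ - x) w) := by
      apply continuousOn_const.mul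
      apply ContinuousOn.div (ha_cont.mono (Icc_subset_Icc hx0le (by linarith)))
        ((continuous_const.sub continuous_id).continuousOn)
      intro s hs
      have h1 : s < x₀ := by linarith [hs.2]
      exact sub_ne_zero.mpr (ne_of_gt h1)
    have hIg : IntervalIntegrable (fun s => K₁ * (a s / (x₀ - s))) volume (x₀ - x) w := by
      apply ContinuousOn.intervalIntegrable
      rwa [uIcc_of_le hxw]
    have hIa' : IntervalIntegrable (fun s => -a' s) volume (x₀ - x) w :=
      (hint (x₀ - x) w hx0le (by linarith) hxw).neg
    have hae : ∀ᵐ s ∂(volume.restrict (Icc (x₀ - x) w)),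
        -a' s ≤ K₁ * (a s / (x₀ - s)) := by
      have h1 : ∀ᵐ s ∂(volume.restrict (Icc (x₀ - x) w)),
          s ∈ Ioo (0:ℝ) 1 → (s - x₀) * a' s ≤ K₁ * a s := ae_restrict_of_ae hdeg'
      have h2 : ∀ᵐ s ∂(volume.restrict (Icc (x₀ - x) w)), s ∈ Icc (x₀ - x) w :=
        ae_restrict_mem measurableSet_Icc
      have h3 : ∀ᵐ s ∂(volume.restrict (Icc (x₀ - x) w)), s ≠ (0:ℝ) := ae_restrict_of_ae hne0
      filter_upwards [h1, h2, h3] with s hs1 hs2 hs3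
      have hsgt0 : 0 < s := lt_of_le_of_ne (le_trans hx0le hs2.1) (Ne.symm hs3)
      have hslt : s < x₀ := by linarith [hs2.2]
      have hd := hs1 ⟨hsgt0, by linarith⟩
      have hxs : 0 < x₀ - s := by linarith
      rw [← mul_div_assoc, le_div_iff₀ hxs]
      nlinarith
    have hmono := integral_mono_ae_restrict hxw hIa' hIg hae
    rw [intervalIntegral.integral_const_mul, intervalIntegral.integral_neg] at hmono
    linarith
  -- positivity of endpoint values
  have ha1 : 0 < a 1 := ha_pos 1 ⟨by norm_num, le_rfl⟩ (by intro h; rw [h] at hx₀1; linarith)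
  have ha0 : 0 < a 0 := ha_pos 0 ⟨le_rfl, by norm_num⟩ (by intro h; rw [← h] at hx₀0; linarith)
  -- integrability on the right piece
  have hIR : IntegrableOn (fun x => 1 / a x) (Ioo x₀ 1) := by
    have hGint : IntegrableOn
        (fun x => (1 / a 1) * ((1 - x₀) ^ K₁ * (x - x₀) ^ (-K₁))) (Ioo x₀ 1) := by
      have h1 : IntervalIntegrable (fun t : ℝ => t ^ (-K₁)) volume 0 (1 - x₀) :=
        intervalIntegral.intervalIntegrable_rpow' (by linarith)
      have h2 := h1.comp_sub_right x₀
      rw [zero_add, sub_add_cancel] at h2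
      have h3 : IntegrableOn (fun x : ℝ => (x - x₀) ^ (-K₁)) (Ioc x₀ 1) := h2.1
      have h4 : IntegrableOn (fun x => (1 / a 1) * (1 - x₀) ^ K₁ * (x - x₀) ^ (-K₁))
          (Ioo x₀ 1) :=
        (h3.mono_set Ioo_subset_Ioc_self).const_mul ((1 / a 1) * (1 - x₀) ^ K₁)
      apply h4.congr_fun ?_ measurableSet_Ioo
      intro x hx
      simp only
      ring
    apply Integrable.mono' hGint
    · apply ContinuousOn.aestronglyMeasurable ?_ measurableSet_Ioo
      apply ContinuousOn.div continuousOn_const (ha_cont.mono ?_) ?_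
      · exact fun t ht => ⟨by linarith [ht.1], le_of_lt ht.2⟩
      · intro t ht
        exact ne_of_gt (ha_pos t ⟨by linarith [ht.1], le_of_lt ht.2⟩ (ne_of_gt ht.1))
    · have hmem : ∀ᵐ x ∂(volume.restrict (Ioo x₀ 1)), x ∈ Ioo x₀ 1 :=
        ae_restrict_mem measurableSet_Ioo
      filter_upwards [hmem] with x hxm
      have hax : 0 < a x := ha_pos x ⟨by linarith [hxm.1], hxm.2.le⟩ (ne_of_gt hxm.1)
      have hb := hbR x ⟨hxm.1, hxm.2.le⟩
      have hxx : 0 < x - x₀ := by linarith [hxm.1]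
      have hpow : ((1 - x₀) / (x - x₀)) ^ K₁ = (1 - x₀) ^ K₁ * (x - x₀) ^ (-K₁) := by
        rw [Real.div_rpow (by linarith) hxx.le, Real.rpow_neg hxx.le, div_eq_mul_inv]
      rw [Real.norm_eq_abs, abs_of_pos (one_div_pos.mpr hax), ← hpow, div_le_iff₀ hax]
      have hP : (0:ℝ) < ((1 - x₀) / (x - x₀)) ^ K₁ :=
        Real.rpow_pos_of_pos (div_pos (by linarith) hxx) _
      calc (1:ℝ) ≤ (a x * ((1 - x₀) / (x - x₀)) ^ K₁) / a 1 := (one_le_div ha1).mpr hb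
        _ = 1 / a 1 * ((1 - x₀) / (x - x₀)) ^ K₁ * a x := by
            rw [div_eq_mul_inv, one_div]; ring
  -- integrability on the left piece
  have hIL : IntegrableOn (fun x => 1 / a x) (Ioo 0 x₀) := by
    have hGint : IntegrableOn
        (fun x => (1 / a 0) * (x₀ ^ K₁ * (x₀ - x) ^ (-K₁))) (Ioo 0 x₀) := by
      have h1 : IntervalIntegrable (fun t : ℝ => t ^ (-K₁)) volume 0 x₀ :=
        intervalIntegral.intervalIntegrable_rpow' (by linarith)
      have h2 := h1.comp_sub_left x₀
      rw [sub_zero, sub_self] at h2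
      have h3 : IntegrableOn (fun x : ℝ => (x₀ - x) ^ (-K₁)) (Ioc 0 x₀) := h2.symm.1
      have h4 : IntegrableOn (fun x => (1 / a 0) * x₀ ^ K₁ * (x₀ - x) ^ (-K₁))
          (Ioo 0 x₀) :=
        (h3.mono_set Ioo_subset_Ioc_self).const_mul ((1 / a 0) * x₀ ^ K₁)
      apply h4.congr_fun ?_ measurableSet_Ioo
      intro x hx
      simp only
      ring
    apply Integrable.mono' hGint
    · apply ContinuousOn.aestronglyMeasurable ?_ measurableSet_Ioo
      apply ContinuousOn.div continuousOn_const (ha_cont.mono ?_) ?_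
      · exact fun t ht => ⟨le_of_lt ht.1, by linarith [ht.2]⟩
      · intro t ht
        exact ne_of_gt (ha_pos t ⟨le_of_lt ht.1, by linarith [ht.2]⟩ (ne_of_lt ht.2))
    · have hmem : ∀ᵐ x ∂(volume.restrict (Ioo 0 x₀)), x ∈ Ioo 0 x₀ :=
        ae_restrict_mem measurableSet_Ioo
      filter_upwards [hmem] with x hxm
      have hax : 0 < a x := ha_pos x ⟨hxm.1.le, by linarith [hxm.2]⟩ (ne_of_lt hxm.2)
      have hb := hbL x ⟨hxm.1.le, hxm.2⟩
      have hxx : 0 < x₀ - x := by linarith [hxm.2]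
      have hpow : (x₀ / (x₀ - x)) ^ K₁ = x₀ ^ K₁ * (x₀ - x) ^ (-K₁) := by
        rw [Real.div_rpow hx₀0.le hxx.le, Real.rpow_neg hxx.le, div_eq_mul_inv]
      rw [Real.norm_eq_abs, abs_of_pos (one_div_pos.mpr hax), ← hpow, div_le_iff₀ hax]
      calc (1:ℝ) ≤ (a x * (x₀ / (x₀ - x)) ^ K₁) / a 0 := (one_le_div ha0).mpr hb
        _ = 1 / a 0 * (x₀ / (x₀ - x)) ^ K₁ * a x := by
            rw [div_eq_mul_inv, one_div]; ring
  -- combine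
  have hsing : IntegrableOn (fun x => 1 / a x) {x₀} := by
    rw [integrableOn_singleton_iff]
    right
    rw [measure_singleton]
    exact ENNReal.zero_lt_top
  have hunion := (hIL.union hIR).union hsing
  apply hunion.mono_set
  intro t ht
  rcases lt_trichotomy t x₀ with h | h | h
  · exact Or.inl (Or.inl ⟨ht.1, h⟩)
  · exact Or.inr (by simp [h])
  · exact Or.inl (Or.inr ⟨h, ht.2⟩)
end

section
/- Let a ∈ W^{1,∞}(0,1) with a(x₀)=0 for some x₀ ∈ (0,1), a>0 on [0,1]\{x₀}, and (x−x₀)a'(x) ≤ K₁ a(x) a.e. with K₁ ∈ [1,2). Then 1/√a ∈ L¹(0,1) but 1/a ∉ L¹(0,1). -/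
open Set MeasureTheory Filter Topology

lemma lipA {L : NNReal} {f f' : ℝ → ℝ} (hf : LipschitzWith L f)
    {u v : ℝ} (huv : u ≤ v)
    (hd : ∀ᵐ x ∂(volume.restrict (Ioo u v)), HasDerivAt f (f' x) x)
    (hle : ∀ᵐ x ∂(volume.restrict (Ioo u v)), f' x ≤ 0) :
    f v ≤ f u := by
  have hcont : Continuous f := hf.continuous
  set ε : ℕ → ℝ := fun n => 1 / (n + 1) with hεdef
  have hεpos : ∀ n, 0 < ε n := fun n => by positivity
  have hεlim : Tendsto ε atTop (𝓝 0) := tendsto_one_div_add_atTop_nhds_zero_nat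
  set Q : ℕ → ℝ → ℝ := fun n t => (f (t + ε n) - f t) / ε n with hQdef
  -- slope convergence for any point with derivative
  have hslope : ∀ (g : ℝ → ℝ) (t d : ℝ), HasDerivAt g d t →
      Tendsto (fun n => (g (t + ε n) - g t) / ε n) atTop (𝓝 d) := by
    intro g t d hg
    have h1 : Tendsto (fun n => t + ε n) atTop (𝓝[≠] t) := by
      apply tendsto_nhdsWithin_of_tendsto_nhds_of_eventually_within
      · simpa using tendsto_const_nhds.add hεlim
      · filter_upwards with n
        simp only [mem_compl_iff, mem_singleton_iff]
        have := hεpos n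
        intro h
        nlinarith
    have h2 := (hasDerivAt_iff_tendsto_slope.1 hg).comp h1
    refine h2.congr fun n => ?_
    simp [slope_def_field, div_eq_div_iff (hεpos n).ne']
  -- integral of Q n equals difference of slopes of antiderivatives
  have hfint : ∀ p q : ℝ, IntervalIntegrable f volume p q :=
    fun p q => hcont.intervalIntegrable p q
  have hFder : HasDerivAt (fun x => ∫ t in v..x, f t) (f v) v :=
    intervalIntegral.integral_hasDerivAt_right (hfint v v)
      hcont.stronglyMeasurable.stronglyMeasurableAtFilter hcont.continuousAt
  have hGder : HasDerivAt (fun x => ∫ t in u..x, f t) (f u) u :=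
    intervalIntegral.integral_hasDerivAt_right (hfint u u)
      hcont.stronglyMeasurable.stronglyMeasurableAtFilter hcont.continuousAt
  have hQint : ∀ n, ∫ t in Ioo u v, Q n t =
      ((∫ s in v..v + ε n, f s) - ∫ s in u..u + ε n, f s) / ε n := by
    intro n
    have h1 : ∫ t in Ioo u v, Q n t = ∫ t in u..v, Q n t := by
      rw [intervalIntegral.integral_of_le huv,
        MeasureTheory.integral_Ioc_eq_integral_Ioo]
    rw [h1]
    have hc1 : IntervalIntegrable (fun t => f (t + ε n)) volume u v :=
      (hcont.comp (continuous_add_right _)).intervalIntegrable u v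
    have h2 : ∫ t in u..v, Q n t
        = ((∫ t in u..v, f (t + ε n)) - ∫ t in u..v, f t) / ε n := by
      rw [← intervalIntegral.integral_sub hc1 (hfint u v)]
      simp only [hQdef, intervalIntegral.integral_div]
    rw [h2, intervalIntegral.integral_comp_add_right f (ε n)]
    congr 1
    have e1 : (∫ s in u..u + ε n, f s) + ∫ s in u + ε n..v + ε n, f s
        = ∫ s in u..v + ε n, f s :=
      intervalIntegral.integral_add_adjacent_intervals (hfint _ _) (hfint _ _)
    have e2 : (∫ s in u..v, f s) + ∫ s in v..v + ε n, f s
        = ∫ s in u..v + ε n, f s :=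
      intervalIntegral.integral_add_adjacent_intervals (hfint _ _) (hfint _ _)
    linarith
  -- limit of the integrals is f v - f u
  have hlim1 : Tendsto (fun n => ∫ t in Ioo u v, Q n t) atTop (𝓝 (f v - f u)) := by
    have hF := hslope _ v (f v) hFder
    have hG := hslope _ u (f u) hGder
    have := hF.sub hG
    refine this.congr fun n => ?_
    rw [hQint n]
    simp only [intervalIntegral.integral_same]
    ring
  -- limit by dominated convergence is the integral of f'
  have hlim2 : Tendsto (fun n => ∫ t in Ioo u v, Q n t) atTop
      (𝓝 (∫ t in Ioo u v, f' t)) := by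
    apply MeasureTheory.tendsto_integral_of_dominated_convergence (fun _ => (L : ℝ))
    · intro n
      exact ((hcont.comp (continuous_add_right _)).sub hcont).div_const (ε n)
        |>.aestronglyMeasurable
    · exact integrableOn_const measure_Ioo_lt_top.ne
    · intro n
      filter_upwards with t
      have hd : dist (f (t + ε n)) (f t) ≤ L * dist (t + ε n) t := hf.dist_le_mul _ _
      rw [Real.dist_eq] at hd
      have : dist (t + ε n) t = ε n := by
        rw [Real.dist_eq]; simp [abs_of_pos (hεpos n)]
      rw [this] at hd
      rw [Real.norm_eq_abs, hQdef]
      rw [abs_div, abs_of_pos (hεpos n), div_le_iff₀ (hεpos n)]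
      exact hd
    · filter_upwards [hd] with t ht
      exact hslope f t (f' t) ht
  have hkey : f v - f u = ∫ t in Ioo u v, f' t := tendsto_nhds_unique hlim1 hlim2
  have : (∫ t in Ioo u v, f' t) ≤ 0 := integral_nonpos_of_ae hle
  linarith

-- helpers
lemma lipOn_sub {f g : ℝ → ℝ} {s : Set ℝ} {K1 K2 : NNReal}
    (hf : LipschitzOnWith K1 f s) (hg : LipschitzOnWith K2 g s) :
    LipschitzOnWith (K1 + K2) (fun x => f x - g x) s := by
  rw [lipschitzOnWith_iff_dist_le_mul] at *
  intro p hp q hq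
  have h1 := hf p hp q hq
  have h2 := hg p hp q hq
  simp only [Real.dist_eq, NNReal.coe_add] at *
  calc |f p - g p - (f q - g q)| = |(f p - f q) - (g p - g q)| := by ring_nf
    _ ≤ |f p - f q| + |g p - g q| := abs_sub _ _
    _ ≤ (K1 + K2) * |p - q| := by nlinarith [abs_nonneg (p - q)]

lemma lipOn_const_mul {f : ℝ → ℝ} {s : Set ℝ} {K : NNReal} (c : ℝ)
    (hf : LipschitzOnWith K f s) :
    LipschitzOnWith (‖c‖₊ * K) (fun x => c * f x) s := by
  rw [lipschitzOnWith_iff_dist_le_mul] at *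
  intro p hp q hq
  have h1 := hf p hp q hq
  simp only [Real.dist_eq, NNReal.coe_mul, coe_nnnorm, Real.norm_eq_abs] at *
  calc |c * f p - c * f q| = |c| * |f p - f q| := by rw [← abs_mul]; ring_nf
    _ ≤ |c| * (K * |p - q|) := by
        exact mul_le_mul_of_nonneg_left h1 (abs_nonneg c)
    _ = |c| * (K : ℝ) * |p - q| := by ring

lemma lipOn_log {m : ℝ} (hm : 0 < m) :
    LipschitzOnWith (m⁻¹.toNNReal) Real.log (Ici m) := by
  apply (convex_Ici m).lipschitzOnWith_of_nnnorm_hasDerivWithin_le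
    (f' := fun t => t⁻¹)
  · intro t ht
    exact (Real.hasDerivAt_log (lt_of_lt_of_le hm ht).ne').hasDerivWithinAt
  · intro t ht
    have htpos : 0 < t := lt_of_lt_of_le hm ht
    rw [← NNReal.coe_le_coe, coe_nnnorm, Real.norm_eq_abs,
      abs_of_pos (inv_pos.2 htpos), Real.coe_toNNReal _ (by positivity)]
    exact inv_anti₀ hm ht

lemma lipB {L : NNReal} {f f' : ℝ → ℝ} {u v : ℝ} (huv : u ≤ v)
    (hf : LipschitzOnWith L f (Icc u v))
    (hd : ∀ᵐ x ∂(volume.restrict (Ioo u v)), HasDerivAt f (f' x) x)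
    (hle : ∀ᵐ x ∂(volume.restrict (Ioo u v)), f' x ≤ 0) :
    f v ≤ f u := by
  obtain ⟨g, hg, heq⟩ := hf.extend_real
  have hdg : ∀ᵐ x ∂(volume.restrict (Ioo u v)), HasDerivAt g (f' x) x := by
    filter_upwards [hd, ae_restrict_mem measurableSet_Ioo] with x hx hmem
    have hev : f =ᶠ[𝓝 x] g :=
      Filter.eventuallyEq_of_mem (Ioo_mem_nhds hmem.1 hmem.2)
        (fun y hy => heq (Ioo_subset_Icc_self hy))
    exact hx.congr_of_eventuallyEq hev.symm
  have := lipA hg huv hdg hle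
  rwa [← heq (right_mem_Icc.2 huv), ← heq (left_mem_Icc.2 huv)] at this

lemma lowerRight (x₀ K₁ : ℝ) (a a' : ℝ → ℝ) (L : NNReal)
    (hx₀ : x₀ ∈ Ioo (0:ℝ) 1)
    (ha_lip : LipschitzOnWith L a (Icc 0 1))
    (ha_deriv : ∀ᵐ x ∂(volume.restrict (Ioo (0:ℝ) 1)), HasDerivAt a (a' x) x)
    (ha_pos : ∀ x ∈ Icc (0:ℝ) 1, x ≠ x₀ → 0 < a x)
    (hdeg : ∀ᵐ x ∂(volume.restrict (Ioo (0:ℝ) 1)), (x - x₀) * a' x ≤ K₁ * a x)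
    (hK : 0 ≤ K₁)
    {x : ℝ} (hx : x ∈ Ioo x₀ 1) :
    a 1 / (1 - x₀) ^ K₁ * (x - x₀) ^ K₁ ≤ a x := by
  obtain ⟨hx₀0, hx₀1⟩ := hx₀
  obtain ⟨hxl, hxr⟩ := hx
  have hx0 : 0 < x := hx₀0.trans hxl
  have hsub : Icc x 1 ⊆ Icc (0:ℝ) 1 := Icc_subset_Icc hx0.le le_rfl
  have apos : ∀ t ∈ Icc x 1, 0 < a t := fun t ht =>
    ha_pos t (hsub ht) (ne_of_gt (hxl.trans_le ht.1))
  -- positive lower bound on [x,1]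
  have acont : ContinuousOn a (Icc x 1) := (ha_lip.continuousOn).mono hsub
  obtain ⟨z, hz, hzmin⟩ := isCompact_Icc.exists_isMinOn (nonempty_Icc.2 hxr.le) acont
  set m := a z with hm_def
  have hm : 0 < m := apos z hz
  have hmle : ∀ t ∈ Icc x 1, m ≤ a t := fun t ht => hzmin ht
  -- the function ψ
  set ψ : ℝ → ℝ := fun t => Real.log (a t) - K₁ * Real.log (t - x₀) with hψdef
  set ψ' : ℝ → ℝ := fun t => a' t / a t - K₁ * (t - x₀)⁻¹ with hψ'def
  -- Lipschitz of ψ on Icc x 1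
  have hL1 : LipschitzOnWith (m⁻¹.toNNReal * L) (fun t => Real.log (a t)) (Icc x 1) :=
    (lipOn_log hm).comp (ha_lip.mono hsub) (fun t ht => hmle t ht)
  have hsubLip : LipschitzWith 1 (fun t : ℝ => t - x₀) :=
    LipschitzWith.of_dist_le_mul (fun p q => by simp [Real.dist_eq])
  have hL2' : LipschitzOnWith ((x - x₀)⁻¹.toNNReal * 1)
      (fun t => Real.log (t - x₀)) (Icc x 1) := by
    apply (lipOn_log (sub_pos.2 hxl)).comp hsubLip.lipschitzOnWith
    intro t ht
    exact sub_le_sub_right ht.1 x₀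
  have hψlip : LipschitzOnWith (m⁻¹.toNNReal * L + ‖K₁‖₊ * ((x - x₀)⁻¹.toNNReal * 1))
      ψ (Icc x 1) := lipOn_sub hL1 (lipOn_const_mul K₁ hL2')
  -- derivative and sign
  have hsubIoo : Ioo x 1 ⊆ Ioo (0:ℝ) 1 := Ioo_subset_Ioo hx0.le le_rfl
  have hd : ∀ᵐ t ∂(volume.restrict (Ioo x 1)), HasDerivAt ψ (ψ' t) t := by
    filter_upwards [ae_restrict_of_ae_restrict_of_subset hsubIoo ha_deriv,
      ae_restrict_mem measurableSet_Ioo] with t ht htm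
    have htpos : 0 < a t := apos t (Ioo_subset_Icc_self htm)
    have ht₀ : x₀ < t := hxl.trans htm.1
    have h1 : HasDerivAt (fun s => Real.log (a s)) (a' t / a t) t := ht.log htpos.ne'
    have h2 : HasDerivAt (fun s => Real.log (s - x₀)) ((t - x₀)⁻¹) t := by
      have := ((hasDerivAt_id t).sub_const x₀).log (sub_ne_zero.2 ht₀.ne')
      simpa using this
    exact h1.sub (h2.const_mul K₁)
  have hle : ∀ᵐ t ∂(volume.restrict (Ioo x 1)), ψ' t ≤ 0 := by
    filter_upwards [ae_restrict_of_ae_restrict_of_subset hsubIoo hdeg,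
      ae_restrict_mem measurableSet_Ioo] with t ht htm
    have htpos : 0 < a t := apos t (Ioo_subset_Icc_self htm)
    have ht₀ : (0:ℝ) < t - x₀ := sub_pos.2 (hxl.trans htm.1)
    have e : ψ' t = ((t - x₀) * a' t - K₁ * a t) / ((t - x₀) * a t) := by
      simp only [hψ'def]
      field_simp
    rw [e]
    exact div_nonpos_of_nonpos_of_nonneg (by linarith) (by positivity)
  have hmono : ψ 1 ≤ ψ x := lipB hxr.le hψlip hd hle
  -- unfold
  have h1x₀ : (0:ℝ) < 1 - x₀ := by linarith
  have hxx₀ : (0:ℝ) < x - x₀ := sub_pos.2 hxl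
  have ha1 : 0 < a 1 := apos 1 (right_mem_Icc.2 hxr.le)
  have hax : 0 < a x := apos x (left_mem_Icc.2 hxr.le)
  have hlogs : Real.log (a 1) - K₁ * Real.log (1 - x₀) ≤
      Real.log (a x) - K₁ * Real.log (x - x₀) := hmono
  rw [← Real.log_le_log_iff (by positivity) hax]
  rw [Real.log_mul (by positivity) (by positivity),
    Real.log_div ha1.ne' (by positivity), Real.log_rpow h1x₀, Real.log_rpow hxx₀]
  linarith

lemma lowerLeft (x₀ K₁ : ℝ) (a a' : ℝ → ℝ) (L : NNReal)
    (hx₀ : x₀ ∈ Ioo (0:ℝ) 1)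
    (ha_lip : LipschitzOnWith L a (Icc 0 1))
    (ha_deriv : ∀ᵐ x ∂(volume.restrict (Ioo (0:ℝ) 1)), HasDerivAt a (a' x) x)
    (ha_pos : ∀ x ∈ Icc (0:ℝ) 1, x ≠ x₀ → 0 < a x)
    (hdeg : ∀ᵐ x ∂(volume.restrict (Ioo (0:ℝ) 1)), (x - x₀) * a' x ≤ K₁ * a x)
    {x : ℝ} (hx : x ∈ Ioo (0:ℝ) x₀) :
    a 0 / x₀ ^ K₁ * (x₀ - x) ^ K₁ ≤ a x := by
  obtain ⟨hx₀0, hx₀1⟩ := hx₀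
  obtain ⟨hxl, hxr⟩ := hx
  have hx1 : x < 1 := hxr.trans hx₀1
  have hsub : Icc (0:ℝ) x ⊆ Icc (0:ℝ) 1 := Icc_subset_Icc le_rfl hx1.le
  have apos : ∀ t ∈ Icc (0:ℝ) x, 0 < a t := fun t ht =>
    ha_pos t (hsub ht) (ne_of_lt (lt_of_le_of_lt ht.2 hxr))
  have acont : ContinuousOn a (Icc (0:ℝ) x) := (ha_lip.continuousOn).mono hsub
  obtain ⟨z, hz, hzmin⟩ := isCompact_Icc.exists_isMinOn (nonempty_Icc.2 hxl.le) acont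
  set m := a z with hm_def
  have hm : 0 < m := apos z hz
  have hmle : ∀ t ∈ Icc (0:ℝ) x, m ≤ a t := fun t ht => hzmin ht
  set ψ : ℝ → ℝ := fun t => K₁ * Real.log (x₀ - t) - Real.log (a t) with hψdef
  set ψ' : ℝ → ℝ := fun t => K₁ * (-(x₀ - t)⁻¹) - a' t / a t with hψ'def
  have hL1 : LipschitzOnWith (m⁻¹.toNNReal * L) (fun t => Real.log (a t)) (Icc (0:ℝ) x) :=
    (lipOn_log hm).comp (ha_lip.mono hsub) (fun t ht => hmle t ht)
  have hsubLip : LipschitzWith 1 (fun t : ℝ => x₀ - t) :=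
    LipschitzWith.of_dist_le_mul (fun p q => le_of_eq (by
      rw [Real.dist_eq, Real.dist_eq, NNReal.coe_one, one_mul,
        show x₀ - p - (x₀ - q) = -(p - q) by ring, abs_neg]))
  have hL2' : LipschitzOnWith ((x₀ - x)⁻¹.toNNReal * 1)
      (fun t => Real.log (x₀ - t)) (Icc (0:ℝ) x) := by
    apply (lipOn_log (sub_pos.2 hxr)).comp hsubLip.lipschitzOnWith
    intro t ht
    exact sub_le_sub_left ht.2 x₀
  have hψlip : LipschitzOnWith (‖K₁‖₊ * ((x₀ - x)⁻¹.toNNReal * 1) + m⁻¹.toNNReal * L)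
      ψ (Icc (0:ℝ) x) := lipOn_sub (lipOn_const_mul K₁ hL2') hL1
  have hsubIoo : Ioo (0:ℝ) x ⊆ Ioo (0:ℝ) 1 := Ioo_subset_Ioo le_rfl hx1.le
  have hd : ∀ᵐ t ∂(volume.restrict (Ioo (0:ℝ) x)), HasDerivAt ψ (ψ' t) t := by
    filter_upwards [ae_restrict_of_ae_restrict_of_subset hsubIoo ha_deriv,
      ae_restrict_mem measurableSet_Ioo] with t ht htm
    have htpos : 0 < a t := apos t (Ioo_subset_Icc_self htm)
    have ht₀ : t < x₀ := htm.2.trans hxr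
    have h1 : HasDerivAt (fun s => Real.log (a s)) (a' t / a t) t := ht.log htpos.ne'
    have h2 : HasDerivAt (fun s => Real.log (x₀ - s)) (-(x₀ - t)⁻¹) t := by
      have h := ((hasDerivAt_const t x₀).sub (hasDerivAt_id t)).log (sub_ne_zero.2 ht₀.ne')
      convert h using 1
      · rfl
      · simp only [Pi.sub_apply, id]
        ring
    exact (h2.const_mul K₁).sub h1
  have hle : ∀ᵐ t ∂(volume.restrict (Ioo (0:ℝ) x)), ψ' t ≤ 0 := by
    filter_upwards [ae_restrict_of_ae_restrict_of_subset hsubIoo hdeg,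
      ae_restrict_mem measurableSet_Ioo] with t ht htm
    have htpos : 0 < a t := apos t (Ioo_subset_Icc_self htm)
    have ht₀ : (0:ℝ) < x₀ - t := sub_pos.2 (htm.2.trans hxr)
    have e : ψ' t = -(K₁ * a t + (x₀ - t) * a' t) / ((x₀ - t) * a t) := by
      simp only [hψ'def]
      field_simp
      ring
    have ht2 : -((x₀ - t) * a' t) ≤ K₁ * a t := by
      have hre : (t - x₀) * a' t = -((x₀ - t) * a' t) := by ring
      rw [hre] at ht
      exact ht
    rw [e]
    exact div_nonpos_of_nonpos_of_nonneg (by linarith) (by positivity)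
  have hmono : ψ x ≤ ψ 0 := lipB hxl.le hψlip hd hle
  have hxx₀ : (0:ℝ) < x₀ - x := sub_pos.2 hxr
  have ha0 : 0 < a 0 := apos 0 (left_mem_Icc.2 hxl.le)
  have hax : 0 < a x := apos x (right_mem_Icc.2 hxl.le)
  have hlogs : K₁ * Real.log (x₀ - x) - Real.log (a x) ≤
      K₁ * Real.log (x₀ - 0) - Real.log (a 0) := hmono
  rw [sub_zero] at hlogs
  rw [← Real.log_le_log_iff (by positivity) hax]
  rw [Real.log_mul (by positivity) (by positivity),
    Real.log_div ha0.ne' (by positivity), Real.log_rpow hx₀0, Real.log_rpow hxx₀]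
  linarith

/-- Lemma 2.1(3): if `a ∈ W^{1,∞}(0,1)` vanishes only at the interior point `x₀` and
`(x-x₀)a' ≤ K₁ a` a.e. with `K₁ ∈ [1,2)`, then `1/√a ∈ L¹(0,1)` but `1/a ∉ L¹(0,1)`. -/
theorem stmt_3 (x₀ K₁ : ℝ) (hx₀ : x₀ ∈ Ioo (0:ℝ) 1) (hK₁ : K₁ ∈ Ico (1:ℝ) 2)
    (a a' : ℝ → ℝ) (L : NNReal)
    (ha_lip : LipschitzOnWith L a (Icc 0 1))
    (ha_deriv : ∀ᵐ x ∂(volume.restrict (Ioo (0:ℝ) 1)), HasDerivAt a (a' x) x)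
    (ha_zero : a x₀ = 0)
    (ha_pos : ∀ x ∈ Icc (0:ℝ) 1, x ≠ x₀ → 0 < a x)
    (hdeg : ∀ᵐ x ∂(volume.restrict (Ioo (0:ℝ) 1)), (x - x₀) * a' x ≤ K₁ * a x) :
    IntegrableOn (fun x => 1 / Real.sqrt (a x)) (Ioo (0:ℝ) 1) ∧
    ¬ IntegrableOn (fun x => 1 / a x) (Ioo (0:ℝ) 1) := by
  obtain ⟨hx₀0, hx₀1⟩ := hx₀
  obtain ⟨hK₁1, hK₁2⟩ := hK₁
  have hK₁0 : (0:ℝ) ≤ K₁ := by linarith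
  have ha1 : 0 < a 1 := ha_pos 1 (right_mem_Icc.2 (by norm_num)) (by linarith [hx₀1])
  have ha0 : 0 < a 0 := ha_pos 0 (left_mem_Icc.2 (by norm_num)) (by linarith [hx₀0])
  have h1x₀ : (0:ℝ) < 1 - x₀ := by linarith
  set c₁ : ℝ := a 1 / (1 - x₀) ^ K₁ with hc₁def
  set c₂ : ℝ := a 0 / x₀ ^ K₁ with hc₂def
  have hc₁ : 0 < c₁ := div_pos ha1 (Real.rpow_pos_of_pos h1x₀ _)
  have hc₂ : 0 < c₂ := div_pos ha0 (Real.rpow_pos_of_pos hx₀0 _)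
  have hexp : (-1:ℝ) < -(K₁ / 2) := by linarith
  constructor
  · -- integrability of 1/sqrt a
    -- right piece
    have baseR : IntervalIntegrable (fun t : ℝ => t ^ (-(K₁/2))) volume 0 (1 - x₀) :=
      intervalIntegral.intervalIntegrable_rpow' hexp
    have hR0 : IntervalIntegrable (fun x : ℝ => (x - x₀) ^ (-(K₁/2))) volume x₀ 1 := by
      have := baseR.comp_sub_right x₀
      simpa using this
    have hRdom : IntegrableOn (fun x : ℝ => (1 / Real.sqrt c₁) * (x - x₀) ^ (-(K₁/2)))
        (Ioo x₀ 1) := by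
      rw [intervalIntegrable_iff_integrableOn_Ioo_of_le hx₀1.le] at hR0
      exact hR0.const_mul _
    have hmeasR : AEStronglyMeasurable (fun x => 1 / Real.sqrt (a x))
        (volume.restrict (Ioo x₀ 1)) := by
      apply ContinuousOn.aestronglyMeasurable _ measurableSet_Ioo
      apply ContinuousOn.div continuousOn_const
      · exact (ha_lip.continuousOn.mono
          (fun y hy => ⟨(hx₀0.trans hy.1).le, hy.2.le⟩)).sqrt
      · intro y hy
        exact (Real.sqrt_pos.2 (ha_pos y ⟨(hx₀0.trans hy.1).le, hy.2.le⟩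
          (ne_of_gt hy.1))).ne'
    have hIntR : IntegrableOn (fun x => 1 / Real.sqrt (a x)) (Ioo x₀ 1) := by
      apply hRdom.mono' hmeasR
      filter_upwards [ae_restrict_mem measurableSet_Ioo] with y hy
      have hy₀ : 0 < y - x₀ := sub_pos.2 hy.1
      have hay : 0 < a y := ha_pos y ⟨(hx₀0.trans hy.1).le, hy.2.le⟩ (ne_of_gt hy.1)
      have hlow : c₁ * (y - x₀) ^ K₁ ≤ a y :=
        lowerRight x₀ K₁ a a' L ⟨hx₀0, hx₀1⟩ ha_lip ha_deriv ha_pos hdeg hK₁0 hy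
      have hsq : Real.sqrt c₁ * (y - x₀) ^ (K₁/2) ≤ Real.sqrt (a y) := by
        have h1 : Real.sqrt (c₁ * (y - x₀) ^ K₁) ≤ Real.sqrt (a y) :=
          Real.sqrt_le_sqrt hlow
        rwa [Real.sqrt_mul hc₁.le, Real.sqrt_eq_rpow ((y - x₀) ^ K₁),
          ← Real.rpow_mul hy₀.le, show K₁ * (1/2) = K₁/2 by ring] at h1
      have hsqpos : 0 < Real.sqrt c₁ * (y - x₀) ^ (K₁/2) := by
        have := Real.rpow_pos_of_pos hy₀ (K₁/2)
        have := Real.sqrt_pos.2 hc₁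
        positivity
      rw [Real.norm_eq_abs, abs_of_nonneg (by positivity)]
      calc 1 / Real.sqrt (a y) ≤ 1 / (Real.sqrt c₁ * (y - x₀) ^ (K₁/2)) :=
            one_div_le_one_div_of_le hsqpos hsq
        _ = (1 / Real.sqrt c₁) * (y - x₀) ^ (-(K₁/2)) := by
            rw [Real.rpow_neg hy₀.le]
            field_simp
    -- left piece
    have baseL : IntervalIntegrable (fun t : ℝ => t ^ (-(K₁/2))) volume 0 x₀ :=
      intervalIntegral.intervalIntegrable_rpow' hexp
    have hL0 : IntervalIntegrable (fun x : ℝ => (x₀ - x) ^ (-(K₁/2))) volume 0 x₀ := by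
      have := (baseL.comp_sub_left x₀).symm
      simpa using this
    have hLdom : IntegrableOn (fun x : ℝ => (1 / Real.sqrt c₂) * (x₀ - x) ^ (-(K₁/2)))
        (Ioo 0 x₀) := by
      rw [intervalIntegrable_iff_integrableOn_Ioo_of_le hx₀0.le] at hL0
      exact hL0.const_mul _
    have hmeasL : AEStronglyMeasurable (fun x => 1 / Real.sqrt (a x))
        (volume.restrict (Ioo 0 x₀)) := by
      apply ContinuousOn.aestronglyMeasurable _ measurableSet_Ioo
      apply ContinuousOn.div continuousOn_const
      · exact (ha_lip.continuousOn.mono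
          (fun y hy => ⟨hy.1.le, (hy.2.trans hx₀1).le⟩)).sqrt
      · intro y hy
        exact (Real.sqrt_pos.2 (ha_pos y ⟨hy.1.le, (hy.2.trans hx₀1).le⟩
          (ne_of_lt hy.2))).ne'
    have hIntL : IntegrableOn (fun x => 1 / Real.sqrt (a x)) (Ioo 0 x₀) := by
      apply hLdom.mono' hmeasL
      filter_upwards [ae_restrict_mem measurableSet_Ioo] with y hy
      have hy₀ : 0 < x₀ - y := sub_pos.2 hy.2
      have hay : 0 < a y := ha_pos y ⟨hy.1.le, (hy.2.trans hx₀1).le⟩ (ne_of_lt hy.2)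
      have hlow : c₂ * (x₀ - y) ^ K₁ ≤ a y :=
        lowerLeft x₀ K₁ a a' L ⟨hx₀0, hx₀1⟩ ha_lip ha_deriv ha_pos hdeg hy
      have hsq : Real.sqrt c₂ * (x₀ - y) ^ (K₁/2) ≤ Real.sqrt (a y) := by
        have h1 : Real.sqrt (c₂ * (x₀ - y) ^ K₁) ≤ Real.sqrt (a y) :=
          Real.sqrt_le_sqrt hlow
        rwa [Real.sqrt_mul hc₂.le, Real.sqrt_eq_rpow ((x₀ - y) ^ K₁),
          ← Real.rpow_mul hy₀.le, show K₁ * (1/2) = K₁/2 by ring] at h1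
      have hsqpos : 0 < Real.sqrt c₂ * (x₀ - y) ^ (K₁/2) := by
        have := Real.rpow_pos_of_pos hy₀ (K₁/2)
        have := Real.sqrt_pos.2 hc₂
        positivity
      rw [Real.norm_eq_abs, abs_of_nonneg (by positivity)]
      calc 1 / Real.sqrt (a y) ≤ 1 / (Real.sqrt c₂ * (x₀ - y) ^ (K₁/2)) :=
            one_div_le_one_div_of_le hsqpos hsq
        _ = (1 / Real.sqrt c₂) * (x₀ - y) ^ (-(K₁/2)) := by
            rw [Real.rpow_neg hy₀.le]
            field_simp
    -- combine
    have hIntRIcc : IntegrableOn (fun x => 1 / Real.sqrt (a x)) (Icc x₀ 1) := by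
      rwa [integrableOn_Icc_iff_integrableOn_Ioo]
    have hcover : Ioo (0:ℝ) 1 ⊆ Ioo 0 x₀ ∪ Icc x₀ 1 := by
      intro y hy
      rcases lt_or_ge y x₀ with h | h
      · exact Or.inl ⟨hy.1, h⟩
      · exact Or.inr ⟨h, hy.2.le⟩
    exact (hIntL.union hIntRIcc).mono_set hcover
  · -- non-integrability of 1/a
    intro hInt
    have hbound : ∀ y ∈ Ioo x₀ 1, a y ≤ L * (y - x₀) := by
      intro y hy
      have := LipschitzOnWith.dist_le_mul ha_lip (x := y) (y := x₀)
        ⟨(hx₀0.trans hy.1).le, hy.2.le⟩ ⟨hx₀0.le, hx₀1.le⟩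
      rw [Real.dist_eq, Real.dist_eq, ha_zero, sub_zero] at this
      rw [abs_of_nonneg (ha_pos y ⟨(hx₀0.trans hy.1).le, hy.2.le⟩
        (ne_of_gt hy.1)).le, abs_of_pos (sub_pos.2 hy.1)] at this
      exact this
    have hInt' : IntegrableOn (fun x => 1 / a x) (Ioo x₀ 1) :=
      hInt.mono_set (Ioo_subset_Ioo hx₀0.le le_rfl)
    have hIntg : IntegrableOn (fun x : ℝ => (x - x₀)⁻¹) (Ioo x₀ 1) := by
      apply (hInt'.const_mul (L:ℝ)).mono'
      · apply ContinuousOn.aestronglyMeasurable _ measurableSet_Ioo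
        apply ContinuousOn.inv₀ (by fun_prop)
        intro y hy
        exact sub_ne_zero.2 (ne_of_gt hy.1)
      · filter_upwards [ae_restrict_mem measurableSet_Ioo] with y hy
        have hy₀ : 0 < y - x₀ := sub_pos.2 hy.1
        have hay : 0 < a y := ha_pos y ⟨(hx₀0.trans hy.1).le, hy.2.le⟩ (ne_of_gt hy.1)
        rw [Real.norm_eq_abs, abs_of_pos (inv_pos.2 hy₀)]
        have h1 : (y - x₀)⁻¹ ≤ L / a y := by
          rw [inv_eq_one_div, div_le_div_iff₀ hy₀ hay]
          have := hbound y hy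
          linarith
        calc (y - x₀)⁻¹ ≤ L / a y := h1
          _ = L * (1 / a y) := by ring
    have hIntI : IntervalIntegrable (fun x : ℝ => (x - x₀)⁻¹) volume x₀ 1 := by
      rw [intervalIntegrable_iff_integrableOn_Ioo_of_le hx₀1.le]
      exact hIntg
    rw [intervalIntegrable_sub_inv_iff] at hIntI
    rcases hIntI with h | h
    · exact absurd h (by linarith)
    · exact h left_mem_uIcc
end

section
/- Let p ∈ C([0,1]) with p > 0 on [0,1]\{x₀}, p(x₀)=0, and suppose there exists q > 1 such that x ↦ p(x)/|x−x₀|^q is non-increasing on [0,x₀) and non-decreasing on (x₀,1]. Then there exists a constant C > 0 such that for every function w, locally absolutely continuous on [0,x₀)∪(x₀,1] with w(0)=w(1)=0 and ∫₀¹ p |w'|² dx < ∞, one has ∫₀¹ p(x) w(x)²/(x−x₀)² dx ≤ C ∫₀¹ p(x) |w'(x)|² dx. -/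
open Set MeasureTheory
open Set MeasureTheory intervalIntegral
open scoped ENNReal

/-- Limit lemma: if `f` is nonneg and continuous on `Ioo x₀ b`, and its integral over every
`Ioo a b` with `x₀ < a < b` is `≤ K`, then `f` is integrable on `Ioo x₀ b` with integral `≤ K`. -/
lemma limit_aux {x₀ b K : ℝ} {f : ℝ → ℝ} (hxb : x₀ < b) (hK : 0 ≤ K)
    (hfc : ContinuousOn f (Ioo x₀ b)) (hf0 : ∀ x ∈ Ioo x₀ b, 0 ≤ f x)
    (h : ∀ a ∈ Ioo x₀ b, IntegrableOn f (Ioo a b) ∧ ∫ x in Ioo a b, f x ≤ K) :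
    IntegrableOn f (Ioo x₀ b) ∧ ∫ x in Ioo x₀ b, f x ≤ K := by
  -- sequence of cut points
  set a : ℕ → ℝ := fun n => x₀ + (b - x₀) / (n + 2) with ha
  have ha_mem : ∀ n, a n ∈ Ioo x₀ b := by
    intro n
    constructor
    · have hb : (0:ℝ) < b - x₀ := by linarith
      have : 0 < (b - x₀) / (n + 2) := by positivity
      simp [ha]; linarith
    · have h2 : (1:ℝ) < (n:ℝ) + 2 := by
        have : (0:ℝ) ≤ n := Nat.cast_nonneg n; linarith
      have : (b - x₀) / (n + 2) < b - x₀ := by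
        apply div_lt_self (by linarith) h2
      simp [ha]; linarith
  have ha_anti : ∀ m n : ℕ, m ≤ n → a n ≤ a m := by
    intro m n hmn
    have hmn' : (m:ℝ) ≤ (n:ℝ) := Nat.cast_le.2 hmn
    have : ((m:ℝ) + 2) ≤ (n:ℝ) + 2 := by linarith
    have := div_le_div_of_nonneg_left (by linarith : (0:ℝ) ≤ b - x₀) (by positivity : (0:ℝ) < (m:ℝ)+2) this
    simp only [ha]; linarith
  have hUnion : (⋃ n, Ioo (a n) b) = Ioo x₀ b := by
    apply Subset.antisymm
    · exact iUnion_subset fun n => Ioo_subset_Ioo (ha_mem n).1.le le_rfl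
    · intro x hx
      obtain ⟨n, hn⟩ := exists_nat_gt ((b - x₀) / (x - x₀))
      refine mem_iUnion.2 ⟨n, ?_, hx.2⟩
      have hx0 : 0 < x - x₀ := by linarith [hx.1]
      have hb0 : 0 < b - x₀ := by linarith
      have : (b - x₀) / ((n:ℝ) + 2) < x - x₀ := by
        rw [div_lt_iff₀ (by positivity)]
        have h1 : (b - x₀) / (x - x₀) < (n:ℝ) + 2 := by linarith
        calc b - x₀ = ((b - x₀) / (x - x₀)) * (x - x₀) := by field_simp
        _ < ((n:ℝ) + 2) * (x - x₀) := by
            exact mul_lt_mul_of_pos_right h1 hx0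
        _ = (x - x₀) * ((n:ℝ) + 2) := by ring
      simp only [ha, mem_Ioo]; linarith
  -- measurability
  have hfm : AEMeasurable f (volume.restrict (Ioo x₀ b)) :=
    (hfc.aemeasurable measurableSet_Ioo)
  -- lintegral bound on each piece
  have hpiece : ∀ n, ∫⁻ x in Ioo (a n) b, ENNReal.ofReal (f x) ≤ ENNReal.ofReal K := by
    intro n
    obtain ⟨hint, hle⟩ := h (a n) (ha_mem n)
    rw [← ofReal_integral_eq_lintegral_ofReal hint
      ((ae_restrict_iff' measurableSet_Ioo).2 (ae_of_all _ fun x hx =>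
        hf0 x ⟨lt_trans (ha_mem n).1 hx.1, hx.2⟩))]
    exact ENNReal.ofReal_le_ofReal hle
  -- monotone convergence
  have hkey : ∫⁻ x in Ioo x₀ b, ENNReal.ofReal (f x) ≤ ENNReal.ofReal K := by
    set F : ℕ → ℝ → ℝ≥0∞ := fun n => (Ioo (a n) b).indicator (fun x => ENNReal.ofReal (f x)) with hF
    have hFm : ∀ n, AEMeasurable (F n) (volume.restrict (Ioo x₀ b)) := fun n =>
      (hfm.ennreal_ofReal).indicator measurableSet_Ioo
    have hFmono : ∀ᵐ x ∂(volume.restrict (Ioo x₀ b)), Monotone fun n => F n x := by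
      refine ae_of_all _ fun x m n hmn => ?_
      exact indicator_le_indicator_of_subset (Ioo_subset_Ioo (ha_anti m n hmn) le_rfl)
        (fun _ => zero_le) x
    have hsup : ∀ᵐ x ∂(volume.restrict (Ioo x₀ b)),
        (⨆ n, F n x) = ENNReal.ofReal (f x) := by
      filter_upwards [ae_restrict_mem measurableSet_Ioo] with x hx
      rw [← hUnion] at hx
      obtain ⟨n, hn⟩ := mem_iUnion.1 hx
      apply le_antisymm
      · exact iSup_le fun m => indicator_le_self _ _ x
      · rw [← indicator_of_mem hn (fun x => ENNReal.ofReal (f x))]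
        exact le_iSup (fun n => F n x) n
    calc ∫⁻ x in Ioo x₀ b, ENNReal.ofReal (f x)
        = ∫⁻ x in Ioo x₀ b, ⨆ n, F n x := (lintegral_congr_ae hsup).symm
      _ = ⨆ n, ∫⁻ x in Ioo x₀ b, F n x := lintegral_iSup' hFm hFmono
      _ ≤ ENNReal.ofReal K := by
          refine iSup_le fun n => ?_
          simp only [hF]
          rw [lintegral_indicator measurableSet_Ioo,
            Measure.restrict_restrict measurableSet_Ioo,
            inter_eq_self_of_subset_left (Ioo_subset_Ioo (ha_mem n).1.le le_rfl)]
          exact hpiece n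
  -- conclude integrability
  have hf0' : 0 ≤ᵐ[volume.restrict (Ioo x₀ b)] f :=
    (ae_restrict_iff' measurableSet_Ioo).2 (ae_of_all _ hf0)
  have hint : IntegrableOn f (Ioo x₀ b) := by
    refine ⟨hfc.aestronglyMeasurable measurableSet_Ioo, ?_⟩
    rw [hasFiniteIntegral_iff_norm]
    calc ∫⁻ x in Ioo x₀ b, ENNReal.ofReal ‖f x‖
        = ∫⁻ x in Ioo x₀ b, ENNReal.ofReal (f x) := by
          refine lintegral_congr_ae ?_
          filter_upwards [hf0'] with x hx
          rw [Real.norm_of_nonneg hx]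
      _ ≤ ENNReal.ofReal K := hkey
      _ < ⊤ := ENNReal.ofReal_lt_top
  refine ⟨hint, ?_⟩
  rw [integral_eq_lintegral_of_nonneg_ae hf0' (hfc.aestronglyMeasurable measurableSet_Ioo)]
  exact ENNReal.toReal_le_of_le_ofReal hK hkey


section
variable {x₀ b q : ℝ} {p w w' : ℝ → ℝ}

/-- Truncated Hardy estimate on `[a, b]`, right of the degeneracy point `x₀`. -/
lemma trunc_aux (hxb : x₀ < b) (hq1 : 1 < q)
    (hpc : ContinuousOn p (Icc x₀ b))
    (hppos : ∀ x ∈ Ioc x₀ b, 0 < p x)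
    (hg : MonotoneOn (fun x => p x / |x - x₀| ^ q) (Ioc x₀ b))
    (hw : ∀ x ∈ Ioc x₀ b, HasDerivAt w (w' x) x)
    (hwb : w b = 0)
    (hJ : IntegrableOn (fun x => p x * w' x ^ 2) (Ioo x₀ b))
    {a : ℝ} (ha : a ∈ Ioo x₀ b) :
    IntegrableOn (fun x => p x * w x ^ 2 / (x - x₀) ^ 2) (Ioo a b) ∧
    ∫ x in Ioo a b, p x * w x ^ 2 / (x - x₀) ^ 2 ≤
      (2 / (q - 1)) ^ 2 * ∫ x in Ioo x₀ b, p x * w' x ^ 2 := by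
  obtain ⟨hax, hab⟩ := ha
  have hIccsub : Icc a b ⊆ Ioc x₀ b := fun x hx => ⟨lt_of_lt_of_le hax hx.1, hx.2⟩
  have hIccsub' : Icc a b ⊆ Icc x₀ b := fun x hx => ⟨le_of_lt (hIccsub hx).1, hx.2⟩
  -- continuity of φ = p / (· - x₀)^2 on Icc a b
  set φ : ℝ → ℝ := fun x => p x / (x - x₀) ^ 2 with hφ
  have hsubpos : ∀ x ∈ Icc a b, (0:ℝ) < x - x₀ := fun x hx => sub_pos.2 (hIccsub hx).1
  have hφc : ContinuousOn φ (Icc a b) := by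
    apply ContinuousOn.div (hpc.mono hIccsub')
    · exact ((continuous_id.sub continuous_const).pow 2).continuousOn
    · intro x hx
      exact pow_ne_zero _ (ne_of_gt (hsubpos x hx))
  have hφ0 : ∀ x ∈ Icc a b, 0 ≤ φ x := fun x hx =>
    div_nonneg (le_of_lt (hppos x (hIccsub hx))) (sq_nonneg _)
  -- the primitive F
  set F : ℝ → ℝ := fun x => ∫ t in a..x, φ t with hF
  have hφint : IntegrableOn φ (Icc a b) := hφc.integrableOn_compact isCompact_Icc
  have hFc : ContinuousOn F (Icc a b) := by
    have := intervalIntegral.continuousOn_primitive_interval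
      (f := φ) (μ := volume) (a := a) (b := b) (by rwa [uIcc_of_le hab.le])
    rwa [uIcc_of_le hab.le] at this
  have hFd : ∀ x ∈ Ioo a b, HasDerivAt F (φ x) x := by
    intro x hx
    have hxo : Ioo a b ∈ nhds x := Ioo_mem_nhds hx.1 hx.2
    have hφco : ContinuousOn φ (Ioo a b) := hφc.mono Ioo_subset_Icc_self
    refine intervalIntegral.integral_hasDerivAt_right
      ((hφint.mono_set ?_).intervalIntegrable ) ?_ ?_
    · rw [uIcc_of_le hx.1.le]; exact Icc_subset_Icc le_rfl hx.2.le
    · exact (hφco.stronglyMeasurableAtFilter isOpen_Ioo x hx)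
    · exact hφco.continuousAt hxo
  have hFa : F a = 0 := integral_same
  -- 0 ≤ F and the key upper bound for F
  have hFnonneg : ∀ x ∈ Icc a b, 0 ≤ F x := by
    intro x hx
    apply intervalIntegral.integral_nonneg hx.1
    intro t ht
    exact hφ0 t ⟨ht.1, le_trans ht.2 hx.2⟩
  have hFle : ∀ x ∈ Icc a b, F x ≤ p x / ((q - 1) * (x - x₀)) := by
    intro x hx
    have hxpos : 0 < x - x₀ := hsubpos x hx
    set g : ℝ → ℝ := fun t => p t / |t - x₀| ^ q with hgdef
    have hgx0 : 0 ≤ g x := div_nonneg (le_of_lt (hppos x (hIccsub hx)))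
      (Real.rpow_nonneg (abs_nonneg _) _)
    -- pointwise bound of φ on [a, x]
    have hpt : ∀ t ∈ Icc a x, φ t ≤ g x * (t - x₀) ^ (q - 2) := by
      intro t ht
      have htmem : t ∈ Icc a b := ⟨ht.1, le_trans ht.2 hx.2⟩
      have htpos : 0 < t - x₀ := hsubpos t htmem
      have hgle : g t ≤ g x := hg (hIccsub htmem) (hIccsub hx) ht.2
      have habs : |t - x₀| = t - x₀ := abs_of_pos htpos
      have h2 : ((t - x₀) ^ q) / (t - x₀) ^ 2 = (t - x₀) ^ (q - 2) := by
        rw [show ((t - x₀):ℝ) ^ 2 = (t - x₀) ^ ((2:ℕ):ℝ) by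
          rw [Real.rpow_natCast], ← Real.rpow_sub htpos]
        norm_num
      have hpt' : p t = g t * (t - x₀) ^ q := by
        rw [hgdef]; field_simp [habs, ne_of_gt (Real.rpow_pos_of_pos htpos q)]
        rw [habs]
      calc φ t = g t * ((t - x₀) ^ q / (t - x₀) ^ 2) := by
            rw [hφ]; simp only []; rw [hpt']; ring
        _ ≤ g x * ((t - x₀) ^ q / (t - x₀) ^ 2) := by
            apply mul_le_mul_of_nonneg_right hgle
            positivity
        _ = g x * (t - x₀) ^ (q - 2) := by rw [h2]
    -- integrate the bound
    have hint1 : IntervalIntegrable φ volume a x :=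
      (hφint.mono_set (by rw [uIcc_of_le hx.1]; exact Icc_subset_Icc le_rfl hx.2)).intervalIntegrable
    have hcont2 : ContinuousOn (fun t => g x * (t - x₀) ^ (q - 2)) (Icc a x) := by
      apply ContinuousOn.mul continuousOn_const
      apply ContinuousOn.rpow_const ((continuous_id.sub continuous_const).continuousOn)
      intro t ht
      exact Or.inl (ne_of_gt (hsubpos t ⟨ht.1, le_trans ht.2 hx.2⟩))
    have hint2 : IntervalIntegrable (fun t => g x * (t - x₀) ^ (q - 2)) volume a x := by
      rw [intervalIntegrable_iff_integrableOn_Icc_of_le hx.1]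
      exact hcont2.integrableOn_compact isCompact_Icc
    have hFle1 : F x ≤ ∫ t in a..x, g x * (t - x₀) ^ (q - 2) :=
      intervalIntegral.integral_mono_on hx.1 hint1 hint2 hpt
    have hval : ∫ t in a..x, (t - x₀) ^ (q - 2)
        = ((x - x₀) ^ (q - 1) - (a - x₀) ^ (q - 1)) / (q - 1) := by
      rw [show (fun t => ((t:ℝ) - x₀) ^ (q - 2)) = fun t => (fun u => u ^ (q - 2)) (t - x₀) from rfl,
        intervalIntegral.integral_comp_sub_right (fun u => u ^ (q - 2)) x₀,
        integral_rpow (Or.inl (by linarith))]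
      rw [show q - 2 + 1 = q - 1 by ring]
    have hxq : (x - x₀) ^ q = (x - x₀) ^ (q - 1) * (x - x₀) := by
      conv_lhs => rw [show q = (q - 1) + 1 by ring]
      rw [Real.rpow_add hxpos, Real.rpow_one]
    have hgxval : g x = p x / (x - x₀) ^ q := by
      rw [hgdef]; simp only []; rw [abs_of_pos hxpos]
    calc F x ≤ ∫ t in a..x, g x * (t - x₀) ^ (q - 2) := hFle1
      _ = g x * (((x - x₀) ^ (q - 1) - (a - x₀) ^ (q - 1)) / (q - 1)) := by
          rw [intervalIntegral.integral_const_mul, hval]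
      _ ≤ g x * ((x - x₀) ^ (q - 1) / (q - 1)) := by
          apply mul_le_mul_of_nonneg_left _ hgx0
          apply div_le_div_of_nonneg_right _ (by linarith)
          have : 0 ≤ (a - x₀) ^ (q - 1) := Real.rpow_nonneg (by linarith : (0:ℝ) ≤ a - x₀) _
          linarith
      _ = p x / ((q - 1) * (x - x₀)) := by
          rw [hgxval, hxq]
          set A := (x - x₀) ^ (q - 1) with hAdef
          have h1 : A ≠ 0 := ne_of_gt (Real.rpow_pos_of_pos hxpos _)
          have h2 : x - x₀ ≠ 0 := ne_of_gt hxpos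
          have h3 : q - 1 ≠ 0 := by linarith
          field_simp
  -- constant
  set c : ℝ := 2 / (q - 1) with hc
  have hq0 : (0:ℝ) < q - 1 := by linarith
  have hcpos : 0 < c := by rw [hc]; positivity
  -- continuity and measurability data
  have hwc : ContinuousOn w (Icc a b) := fun x hx =>
    ((hw x (hIccsub hx)).continuousAt).continuousWithinAt
  have hw'meas : AEStronglyMeasurable w' (volume.restrict (Icc a b)) := by
    refine ((stronglyMeasurable_deriv w).aestronglyMeasurable).congr ?_
    refine (ae_restrict_iff' measurableSet_Icc).2 (ae_of_all _ fun x hx => ?_)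
    exact (hw x (hIccsub hx)).deriv
  have hpw2 : IntegrableOn (fun x => p x * w' x ^ 2) (Icc a b) := by
    have h1 : IntegrableOn (fun x => p x * w' x ^ 2) (Ioo a b) :=
      hJ.mono_set (Ioo_subset_Ioo hax.le le_rfl)
    exact h1.congr_set_ae Ioo_ae_eq_Icc.symm
  -- minimum of p on [a,b]
  obtain ⟨z, hzmem, hzmin⟩ := isCompact_Icc.exists_isMinOn (nonempty_Icc.2 hab.le)
    (hpc.mono hIccsub')
  have hm : 0 < p z := hppos z (hIccsub hzmem)
  have hmin : ∀ x ∈ Icc a b, p z ≤ p x := fun x hx => hzmin hx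
  -- w' is integrable on [a,b]
  have hw'int : IntegrableOn w' (Icc a b) := by
    refine Integrable.mono' (g := fun x => 1 + (1 / p z) * (p x * w' x ^ 2))
      ((integrable_const 1).add (hpw2.const_mul _)) hw'meas ?_
    refine (ae_restrict_iff' measurableSet_Icc).2 (ae_of_all _ fun x hx => ?_)
    have hpx : p z ≤ p x := hmin x hx
    rw [Real.norm_eq_abs]
    rcases le_or_gt |w' x| 1 with h1 | h1
    · have hpx0 : 0 ≤ p x := le_trans hm.le hpx
      have : 0 ≤ (1 / p z) * (p x * w' x ^ 2) := by positivity
      linarith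
    · have h2 : |w' x| ≤ w' x ^ 2 := by nlinarith [abs_nonneg (w' x), sq_abs (w' x)]
      have h3 : p z * w' x ^ 2 ≤ p x * w' x ^ 2 := by nlinarith [sq_nonneg (w' x)]
      have h4 : (1 / p z) * (p z * w' x ^ 2) ≤ (1 / p z) * (p x * w' x ^ 2) := by
        apply mul_le_mul_of_nonneg_left h3; positivity
      rw [one_div] at h4 ⊢
      rw [inv_mul_cancel_left₀ (ne_of_gt hm)] at h4
      linarith
  -- bound for F * (2 w)
  have h2wc : ContinuousOn (fun x => F x * (2 * w x)) (Icc a b) :=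
    hFc.mul (continuousOn_const.mul hwc)
  obtain ⟨M, hM⟩ := isCompact_Icc.exists_bound_of_continuousOn h2wc
  -- integrability of the two parts of the derivative
  have hD1int : IntegrableOn (fun x => φ x * w x ^ 2) (Icc a b) :=
    (hφc.mul (hwc.pow 2)).integrableOn_compact isCompact_Icc
  have hD2int : IntegrableOn (fun x => F x * (2 * w x * w' x)) (Icc a b) := by
    have hmeas : AEStronglyMeasurable (fun x => F x * (2 * w x * w' x))
        (volume.restrict (Icc a b)) := by
      have h1 : AEStronglyMeasurable (fun x => (F x * (2 * w x)) * w' x)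
          (volume.restrict (Icc a b)) :=
        ((hFc.mul (continuousOn_const.mul hwc)).aestronglyMeasurable
          measurableSet_Icc).mul hw'meas
      exact h1.congr (ae_of_all _ fun x => by ring)
    refine Integrable.mono' (g := fun x => M * ‖w' x‖)
      (hw'int.norm.const_mul M) hmeas ?_
    refine (ae_restrict_iff' measurableSet_Icc).2 (ae_of_all _ fun x hx => ?_)
    have h1 : ‖F x * (2 * w x * w' x)‖ = ‖F x * (2 * w x)‖ * ‖w' x‖ := by
      rw [← norm_mul]; congr 1; ring
    rw [h1]
    exact mul_le_mul_of_nonneg_right (hM x hx) (norm_nonneg _)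
  have h1ii : IntervalIntegrable (fun x => φ x * w x ^ 2) volume a b := by
    rw [intervalIntegrable_iff_integrableOn_Icc_of_le hab.le]; exact hD1int
  have h2ii : IntervalIntegrable (fun x => F x * (2 * w x * w' x)) volume a b := by
    rw [intervalIntegrable_iff_integrableOn_Icc_of_le hab.le]; exact hD2int
  have h3ii : IntervalIntegrable (fun x => p x * w' x ^ 2) volume a b := by
    rw [intervalIntegrable_iff_integrableOn_Icc_of_le hab.le]; exact hpw2
  -- fundamental theorem of calculus / integration by parts
  have hFTC : ∫ x in a..b, (φ x * w x ^ 2 + F x * (2 * w x * w' x))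
      = F b * w b ^ 2 - F a * w a ^ 2 := by
    refine integral_eq_sub_of_hasDeriv_right_of_le hab.le (hFc.mul (hwc.pow 2))
      (fun x hx => ?_) (h1ii.add h2ii)
    have hd := (hFd x hx).mul ((hw x (hIccsub (Ioo_subset_Icc_self hx))).pow 2)
    have hd' : HasDerivAt (fun y => F y * w y ^ 2)
        (φ x * w x ^ 2 + F x * (2 * w x * w' x)) x := by
      exact hd.congr_deriv (by rw [Pi.pow_apply, show (2:ℕ) - 1 = 1 from rfl]; push_cast; ring)
    exact hd'.hasDerivWithinAt
  have hsplit : ∫ x in a..b, φ x * w x ^ 2 = - ∫ x in a..b, F x * (2 * w x * w' x) := by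
    rw [intervalIntegral.integral_add h1ii h2ii, hFa, hwb] at hFTC
    linarith [hFTC]
  -- pointwise Young inequality
  have hYoung : ∀ x ∈ Icc a b, ‖F x * (2 * w x * w' x)‖ ≤
      1 / 2 * (φ x * w x ^ 2) + c ^ 2 / 2 * (p x * w' x ^ 2) := by
    intro x hx
    have hxpos := hsubpos x hx
    have hps : 0 ≤ p x := (hppos x (hIccsub hx)).le
    have hF1 := hFnonneg x hx
    have hF2 := hFle x hx
    have habs : ‖F x * (2 * w x * w' x)‖ = 2 * F x * |w x| * |w' x| := by
      rw [Real.norm_eq_abs, abs_mul, abs_of_nonneg hF1, abs_mul, abs_mul, abs_two]; ring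
    have h2F : 2 * F x ≤ c * (p x / (x - x₀)) := by
      have he : c * (p x / (x - x₀)) = 2 * (p x / ((q - 1) * (x - x₀))) := by
        rw [hc]; field_simp
      rw [he]; linarith
    have step1 : 2 * F x * |w x| * |w' x| ≤ c * (p x / (x - x₀)) * (|w x| * |w' x|) := by
      calc 2 * F x * |w x| * |w' x| = (2 * F x) * (|w x| * |w' x|) := by ring
        _ ≤ (c * (p x / (x - x₀))) * (|w x| * |w' x|) :=
            mul_le_mul_of_nonneg_right h2F (by positivity)
    set s := Real.sqrt (p x) with hsdef
    have hs : s ^ 2 = p x := Real.sq_sqrt hps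
    set A := s * |w x| / (x - x₀) with hA
    set B := s * |w' x| with hB
    have hkey : c * A * B ≤ A ^ 2 / 2 + c ^ 2 * B ^ 2 / 2 := by
      nlinarith [sq_nonneg (A - c * B)]
    have hAB : c * (p x / (x - x₀)) * (|w x| * |w' x|) = c * A * B := by
      rw [hA, hB, ← hs]; field_simp
    have hA2 : A ^ 2 = φ x * w x ^ 2 := by
      rw [hA, hφ]; simp only []
      rw [div_pow, mul_pow, hs, sq_abs]; ring
    have hB2 : B ^ 2 = p x * w' x ^ 2 := by
      rw [hB, mul_pow, hs, sq_abs]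
    rw [habs, ← hA2, ← hB2]
    calc 2 * F x * |w x| * |w' x| ≤ c * (p x / (x - x₀)) * (|w x| * |w' x|) := step1
      _ = c * A * B := hAB
      _ ≤ A ^ 2 / 2 + c ^ 2 * B ^ 2 / 2 := hkey
      _ = 1 / 2 * A ^ 2 + c ^ 2 / 2 * B ^ 2 := by ring
  -- main estimate on [a, b]
  have hmain : ∫ x in a..b, φ x * w x ^ 2 ≤ c ^ 2 * ∫ x in a..b, p x * w' x ^ 2 := by
    have hstep : ∫ x in a..b, φ x * w x ^ 2 ≤
        ∫ x in a..b, (1 / 2 * (φ x * w x ^ 2) + c ^ 2 / 2 * (p x * w' x ^ 2)) := by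
      rw [hsplit]
      calc - ∫ x in a..b, F x * (2 * w x * w' x)
          ≤ |∫ x in a..b, F x * (2 * w x * w' x)| := neg_le_abs _
        _ ≤ ∫ x in a..b, ‖F x * (2 * w x * w' x)‖ := by
            rw [← Real.norm_eq_abs]
            exact intervalIntegral.norm_integral_le_integral_norm hab.le
        _ ≤ ∫ x in a..b, (1 / 2 * (φ x * w x ^ 2) + c ^ 2 / 2 * (p x * w' x ^ 2)) := by
            apply intervalIntegral.integral_mono_on hab.le h2ii.norm
              ((h1ii.const_mul _).add (h3ii.const_mul _))
            exact hYoung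
    rw [intervalIntegral.integral_add (h1ii.const_mul _) (h3ii.const_mul _),
      intervalIntegral.integral_const_mul, intervalIntegral.integral_const_mul] at hstep
    linarith
  -- pass to the set integrals
  have hcongr : ∀ x, φ x * w x ^ 2 = p x * w x ^ 2 / (x - x₀) ^ 2 := fun x => by
    rw [hφ]; ring
  have hRle : ∫ x in a..b, p x * w' x ^ 2 ≤ ∫ x in Ioo x₀ b, p x * w' x ^ 2 := by
    rw [intervalIntegral.integral_of_le hab.le]
    refine setIntegral_mono_set hJ ?_ ?_
    · refine (ae_restrict_iff' measurableSet_Ioo).2 (ae_of_all _ fun x hx => ?_)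
      have := hppos x ⟨hx.1, hx.2.le⟩
      positivity
    · rw [ae_le_set]
      refine measure_mono_null (fun x hx => ?_) (measure_singleton b)
      simp only [mem_diff, mem_Ioc, mem_Ioo, not_and, not_lt] at hx
      have h1 := hx.1
      have h2 := hx.2 (lt_trans hax h1.1)
      exact mem_singleton_iff.2 (le_antisymm h1.2 h2)
  have hIoo : IntegrableOn (fun x => p x * w x ^ 2 / (x - x₀) ^ 2) (Ioo a b) := by
    refine ((hD1int.mono_set Ioo_subset_Icc_self).congr_fun ?_ measurableSet_Ioo)
    intro x _; exact hcongr x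
  refine ⟨hIoo, ?_⟩
  have heq : ∫ x in Ioo a b, p x * w x ^ 2 / (x - x₀) ^ 2 = ∫ x in a..b, φ x * w x ^ 2 := by
    rw [intervalIntegral.integral_of_le hab.le, ← integral_Ioc_eq_integral_Ioo]
    exact setIntegral_congr_fun measurableSet_Ioc fun x _ => (hcongr x).symm
  rw [heq]
  calc ∫ x in a..b, φ x * w x ^ 2 ≤ c ^ 2 * ∫ x in a..b, p x * w' x ^ 2 := hmain
    _ ≤ c ^ 2 * ∫ x in Ioo x₀ b, p x * w' x ^ 2 := by
        apply mul_le_mul_of_nonneg_left hRle; positivity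
    _ = (2 / (q - 1)) ^ 2 * ∫ x in Ioo x₀ b, p x * w' x ^ 2 := by rw [hc]


/-- Hardy inequality on `(x₀, b)`, right of the degeneracy point. -/
lemma core_aux (hxb : x₀ < b) (hq1 : 1 < q)
    (hpc : ContinuousOn p (Icc x₀ b))
    (hppos : ∀ x ∈ Ioc x₀ b, 0 < p x)
    (hg : MonotoneOn (fun x => p x / |x - x₀| ^ q) (Ioc x₀ b))
    (hw : ∀ x ∈ Ioc x₀ b, HasDerivAt w (w' x) x)
    (hwb : w b = 0)
    (hJ : IntegrableOn (fun x => p x * w' x ^ 2) (Ioo x₀ b)) :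
    IntegrableOn (fun x => p x * w x ^ 2 / (x - x₀) ^ 2) (Ioo x₀ b) ∧
    ∫ x in Ioo x₀ b, p x * w x ^ 2 / (x - x₀) ^ 2 ≤
      (2 / (q - 1)) ^ 2 * ∫ x in Ioo x₀ b, p x * w' x ^ 2 := by
  have hJ0 : 0 ≤ ∫ x in Ioo x₀ b, p x * w' x ^ 2 := by
    refine setIntegral_nonneg measurableSet_Ioo fun x hx => ?_
    have := hppos x ⟨hx.1, hx.2.le⟩; positivity
  have hq0 : (0:ℝ) < q - 1 := by linarith
  have hK : 0 ≤ (2 / (q - 1)) ^ 2 * ∫ x in Ioo x₀ b, p x * w' x ^ 2 := by positivity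
  refine limit_aux hxb hK ?_ ?_ ?_
  · intro x hx
    refine ContinuousAt.continuousWithinAt ?_
    refine ContinuousAt.div ?_ (((continuous_id.sub continuous_const).pow 2).continuousAt) ?_
    · exact (hpc.continuousAt (Icc_mem_nhds hx.1 hx.2)).mul
        (((hw x ⟨hx.1, hx.2.le⟩).continuousAt).pow 2)
    · exact pow_ne_zero _ (sub_ne_zero.2 (ne_of_gt hx.1))
  · intro x hx
    have := hppos x ⟨hx.1, hx.2.le⟩
    positivity
  · intro a ha
    exact trunc_aux hxb hq1 hpc hppos hg hw hwb hJ ha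

end


/-- Proposition 2.2 (weighted Hardy–Poincaré inequality with interior zero of the weight):
if `p` is continuous on `[0,1]`, positive away from `x₀`, `p(x₀)=0`, and `p(x)/|x-x₀|^q`
is non-increasing left of `x₀` and non-decreasing right of `x₀` for some `q > 1`, then
there is `C > 0` such that every `w` which is (locally absolutely continuous, encoded by
a derivative `w'` on `[0,1]∖{x₀}`) with `w 0 = w 1 = 0` and `∫ p (w')² < ∞` satisfies
`∫ p w²/(x-x₀)² ≤ C ∫ p (w')²`. -/
theorem stmt_4 (x₀ : ℝ) (hx₀ : x₀ ∈ Ioo (0:ℝ) 1)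
    (p : ℝ → ℝ)
    (hp_cont : ContinuousOn p (Icc 0 1))
    (hp_pos : ∀ x ∈ Icc (0:ℝ) 1, x ≠ x₀ → 0 < p x)
    (hp_zero : p x₀ = 0)
    (hq : ∃ q : ℝ, 1 < q ∧
      AntitoneOn (fun x => p x / |x - x₀| ^ q) (Ico (0:ℝ) x₀) ∧
      MonotoneOn (fun x => p x / |x - x₀| ^ q) (Ioc x₀ 1)) :
    ∃ C : ℝ, 0 < C ∧ ∀ w w' : ℝ → ℝ,
      (∀ x ∈ Icc (0:ℝ) 1 \ {x₀}, HasDerivAt w (w' x) x) →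
      w 0 = 0 → w 1 = 0 →
      IntegrableOn (fun x => p x * (w' x) ^ 2) (Ioo (0:ℝ) 1) →
      ∫ x in Ioo (0:ℝ) 1, p x * (w x) ^ 2 / (x - x₀) ^ 2 ≤
        C * ∫ x in Ioo (0:ℝ) 1, p x * (w' x) ^ 2 := by
  obtain ⟨q, hq1, hA, hM⟩ := hq
  obtain ⟨hx0, hx1⟩ := hx₀
  have hq0 : (0:ℝ) < q - 1 := by linarith
  refine ⟨(2 / (q - 1)) ^ 2, by positivity, ?_⟩
  intro w w' hw hw0 hw1 hJint
  set c2 : ℝ := (2 / (q - 1)) ^ 2 with hc2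
  -- right part
  have hR : IntegrableOn (fun x => p x * w x ^ 2 / (x - x₀) ^ 2) (Ioo x₀ 1) ∧
      ∫ x in Ioo x₀ 1, p x * w x ^ 2 / (x - x₀) ^ 2 ≤
        c2 * ∫ x in Ioo x₀ 1, p x * w' x ^ 2 := by
    refine core_aux hx1 hq1 (hp_cont.mono (Icc_subset_Icc hx0.le le_rfl))
      (fun x hx => hp_pos x ⟨le_trans hx0.le hx.1.le, hx.2⟩ (ne_of_gt hx.1)) hM
      (fun x hx => hw x ⟨⟨le_trans hx0.le hx.1.le, hx.2⟩, by simp [ne_of_gt hx.1]⟩)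
      hw1 (hJint.mono_set (Ioo_subset_Ioo hx0.le le_rfl))
  -- left part via reflection
  have hpre : Neg.neg ⁻¹' (Ioo (0:ℝ) x₀) = Ioo (-x₀) 0 := by
    ext x; simp only [mem_preimage, mem_Ioo]; constructor <;> intro h <;>
      constructor <;> linarith [h.1, h.2]
  have hmp := Measure.measurePreserving_neg (volume : Measure ℝ)
  have hemb := (Homeomorph.neg ℝ).measurableEmbedding
  have hL0 : IntegrableOn (fun x => p (-x) * w (-x) ^ 2 / (x - -x₀) ^ 2 : ℝ → ℝ) (Ioo (-x₀) 0) ∧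
      ∫ x in Ioo (-x₀) 0, p (-x) * w (-x) ^ 2 / (x - -x₀) ^ 2 ≤
        c2 * ∫ x in Ioo (-x₀) 0, p (-x) * (-w' (-x)) ^ 2 := by
    refine core_aux (x₀ := -x₀) (b := 0) (q := q)
      (p := fun x => p (-x)) (w := fun x => w (-x)) (w' := fun x => -w' (-x))
      (by linarith) hq1 ?_ ?_ ?_ ?_ (by simpa using hw0) ?_
    · refine (hp_cont.comp continuous_neg.continuousOn ?_)
      intro x hx
      exact ⟨by linarith [hx.2], by linarith [hx.1]⟩
    · intro x hx
      exact hp_pos (-x) ⟨by linarith [hx.2], by linarith [hx.1]⟩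
        (ne_of_lt (show -x < x₀ by linarith [hx.1]))
    · intro u hu v hv huv
      have h1 : -v ∈ Ico (0:ℝ) x₀ := ⟨by linarith [hv.2], by linarith [hv.1]⟩
      have h2 : -u ∈ Ico (0:ℝ) x₀ := ⟨by linarith [hu.2], by linarith [hu.1]⟩
      have hle : -v ≤ -u := by linarith
      have := hA h1 h2 hle
      simp only [] at this ⊢
      rw [show u - -x₀ = -(-u - x₀) by ring, show v - -x₀ = -(-v - x₀) by ring,
        abs_neg, abs_neg]
      exact this
    · intro x hx
      have hmem : -x ∈ Icc (0:ℝ) 1 \ {x₀} := by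
        refine ⟨⟨by linarith [hx.2], by linarith [hx.1]⟩, ?_⟩
        simp only [mem_singleton_iff]
        have : -x < x₀ := by linarith [hx.1]
        exact ne_of_lt this
      have h := (hw (-x) hmem).comp x (hasDerivAt_neg x)
      rw [show -w' (-x) = w' (-x) * -1 by ring]
      exact h
    · have base : IntegrableOn (fun x => p x * w' x ^ 2) (Ioo 0 x₀) :=
        hJint.mono_set (Ioo_subset_Ioo le_rfl hx1.le)
      have h1 := (hmp.integrableOn_comp_preimage hemb).2 base
      rw [hpre] at h1
      exact h1.congr_fun (fun x _ => by simp [Function.comp, neg_sq]) measurableSet_Ioo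
  -- transfer the left part back
  have eqL1 : ∫ x in Ioo (-x₀) 0, p (-x) * w (-x) ^ 2 / (x - -x₀) ^ 2
      = ∫ x in Ioo 0 x₀, p x * w x ^ 2 / (x - x₀) ^ 2 := by
    rw [← hpre]
    rw [show (fun x => p (-x) * w (-x) ^ 2 / (x - -x₀) ^ 2 : ℝ → ℝ)
      = fun x => (fun y => p y * w y ^ 2 / (y - x₀) ^ 2) (-x) from funext fun x => by
        simp only []; rw [show (x - -x₀ : ℝ) ^ 2 = (-x - x₀) ^ 2 by ring]]
    exact hmp.setIntegral_preimage_emb hemb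
      (fun y => p y * w y ^ 2 / (y - x₀) ^ 2) (Ioo 0 x₀)
  have eqL2 : ∫ x in Ioo (-x₀) 0, p (-x) * (-w' (-x)) ^ 2
      = ∫ x in Ioo 0 x₀, p x * w' x ^ 2 := by
    rw [← hpre]
    rw [show (fun x => p (-x) * (-w' (-x)) ^ 2 : ℝ → ℝ)
      = fun x => (fun y => p y * w' y ^ 2) (-x) from funext fun x => by
        simp only [neg_sq]]
    exact hmp.setIntegral_preimage_emb hemb (fun y => p y * w' y ^ 2) (Ioo 0 x₀)
  have hLint : IntegrableOn (fun x => p x * w x ^ 2 / (x - x₀) ^ 2) (Ioo 0 x₀) := by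
    have h1 : IntegrableOn (fun x => (fun y => p y * w y ^ 2 / (y - x₀) ^ 2) (-x))
        (Neg.neg ⁻¹' (Ioo (0:ℝ) x₀)) := by
      rw [hpre]
      refine (hL0.1.congr_fun (fun x _ => ?_) measurableSet_Ioo)
      simp only []
      rw [show ((-x:ℝ) - x₀) ^ 2 = (x - -x₀) ^ 2 by ring]
    exact (hmp.integrableOn_comp_preimage hemb).1 h1
  have hLle : ∫ x in Ioo 0 x₀, p x * w x ^ 2 / (x - x₀) ^ 2 ≤
      c2 * ∫ x in Ioo 0 x₀, p x * w' x ^ 2 := by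
    rw [← eqL1, ← eqL2]; exact hL0.2
  -- split the full integrals
  have hsplitset : Ioo (0:ℝ) 1 = Ioo 0 x₀ ∪ Ico x₀ 1 := (Ioo_union_Ico_eq_Ioo hx0 hx1.le).symm
  have hdisj : Disjoint (Ioo (0:ℝ) x₀) (Ico x₀ 1) :=
    Ico_disjoint_Ico_same.mono_left Ioo_subset_Ico_self
  have hRIco : IntegrableOn (fun x => p x * w x ^ 2 / (x - x₀) ^ 2) (Ico x₀ 1) :=
    hR.1.congr_set_ae Ioo_ae_eq_Ico.symm
  have hJl : IntegrableOn (fun x => p x * w' x ^ 2) (Ioo 0 x₀) :=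
    hJint.mono_set (Ioo_subset_Ioo le_rfl hx1.le)
  have hJr : IntegrableOn (fun x => p x * w' x ^ 2) (Ico x₀ 1) :=
    (hJint.mono_set (Ioo_subset_Ioo hx0.le le_rfl)).congr_set_ae Ioo_ae_eq_Ico.symm
  rw [hsplitset, setIntegral_union hdisj measurableSet_Ico hLint hRIco,
    setIntegral_union hdisj measurableSet_Ico hJl hJr,
    integral_Ico_eq_integral_Ioo, integral_Ico_eq_integral_Ioo]
  have h2 := hR.2
  rw [mul_add]
  linarith
end

section
/- Let x₀ ∈ (0,1) and b ∈ W^{1,∞}(0,1) with b(x₀)=0, b>0 on [0,1]\{x₀}, and (x−x₀)b'(x) ≤ K₂ b(x) a.e. with K₂ ≥ 1. If u ∈ W^{1,1}₀(0,1) satisfies ∫₀¹ u²/b dx < ∞, then u(x₀) = 0. -/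
open Set MeasureTheory

/-- Lemma 2.4: if `b ∈ W^{1,∞}(0,1)` vanishes only at the interior point `x₀` with
`(x-x₀)b' ≤ K₂ b` a.e., `K₂ ≥ 1`, and `u ∈ W^{1,1}₀(0,1)` (absolutely continuous with
`u 0 = u 1 = 0`) satisfies `∫ u²/b < ∞`, then `u x₀ = 0`. -/
theorem stmt_8 (x₀ K₂ : ℝ) (hx₀ : x₀ ∈ Ioo (0:ℝ) 1) (hK₂ : 1 ≤ K₂)
    (b b' : ℝ → ℝ) (L : NNReal)
    (hb_lip : LipschitzOnWith L b (Icc 0 1))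
    (hb_deriv : ∀ᵐ x ∂(volume.restrict (Ioo (0:ℝ) 1)), HasDerivAt b (b' x) x)
    (hb_zero : b x₀ = 0)
    (hb_pos : ∀ x ∈ Icc (0:ℝ) 1, x ≠ x₀ → 0 < b x)
    (hbdeg : ∀ᵐ x ∂(volume.restrict (Ioo (0:ℝ) 1)), (x - x₀) * b' x ≤ K₂ * b x)
    (u : ℝ → ℝ)
    (hu_cont : ContinuousOn u (Icc 0 1))
    (hu0 : u 0 = 0) (hu1 : u 1 = 0)
    (hint : IntegrableOn (fun x => (u x) ^ 2 / b x) (Ioo (0:ℝ) 1)) :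
    u x₀ = 0 := by
  by_contra hne
  have hx₀I : x₀ ∈ Icc (0:ℝ) 1 := ⟨hx₀.1.le, hx₀.2.le⟩
  set ε : ℝ := |u x₀| / 2 with hεdef
  have hεpos : 0 < ε := by
    have : 0 < |u x₀| := abs_pos.mpr hne
    positivity
  obtain ⟨δ, hδpos, hδ⟩ :=
    Metric.continuousWithinAt_iff.mp (hu_cont x₀ hx₀I) ε hεpos
  set δ' : ℝ := min (δ/2) ((1 - x₀)/2) with hδ'def
  have hδ'pos : 0 < δ' := lt_min (by linarith) (by have := hx₀.2; linarith)
  have hδ'δ : δ' ≤ δ/2 := min_le_left _ _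
  have hδ'1 : x₀ + δ' < 1 := by
    have h := min_le_right (δ/2) ((1 - x₀)/2)
    have := hx₀.2
    simp only [hδ'def] at *
    linarith
  set M : ℝ := (L : ℝ) + 1 with hMdef
  have hMpos : 0 < M := by positivity
  have hsub : Ioo x₀ (x₀ + δ') ⊆ Ioo (0:ℝ) 1 := fun x hx =>
    ⟨lt_trans hx₀.1 hx.1, lt_trans hx.2 hδ'1⟩
  -- pointwise bound on Ioo x₀ (x₀+δ')
  have key : ∀ x ∈ Ioo x₀ (x₀ + δ'),
      ε ^ 2 / M * (x - x₀)⁻¹ ≤ u x ^ 2 / b x := by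
    intro x hx
    have hxI : x ∈ Icc (0:ℝ) 1 := ⟨(hsub hx).1.le, (hsub hx).2.le⟩
    have hxne : x ≠ x₀ := ne_of_gt hx.1
    have hbx : 0 < b x := hb_pos x hxI hxne
    have hxx₀ : 0 < x - x₀ := sub_pos.mpr hx.1
    -- b x ≤ M * (x - x₀)
    have hbb : b x ≤ M * (x - x₀) := by
      have h1 := hb_lip.dist_le_mul x hxI x₀ hx₀I
      rw [Real.dist_eq, Real.dist_eq, hb_zero, sub_zero] at h1
      have h2 : |x - x₀| = x - x₀ := abs_of_pos hxx₀
      rw [h2] at h1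
      have h3 : b x ≤ |b x| := le_abs_self _
      nlinarith [h1, h3]
    -- ε ≤ |u x|
    have huε : ε ≤ |u x| := by
      have hdx : dist x x₀ < δ := by
        rw [Real.dist_eq, abs_of_pos hxx₀]
        have := hx.2
        simp only [hδ'def] at this ⊢
        have h := min_le_left (δ/2) ((1 - x₀)/2)
        linarith
      have := hδ hxI hdx
      rw [Real.dist_eq] at this
      have h1 : |u x₀| ≤ |u x₀ - u x| + |u x| := by
        have := abs_sub_abs_le_abs_sub (u x₀) (u x)
        have h2 := abs_sub_comm (u x) (u x₀)
        linarith [le_abs_self (u x₀), abs_nonneg (u x)]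
      rw [abs_sub_comm] at this
      simp only [hεdef] at *
      linarith
    have hε2 : ε ^ 2 ≤ u x ^ 2 := by
      have := pow_le_pow_left₀ hεpos.le huε 2
      rwa [sq_abs] at this
    have h4 : ε ^ 2 / (M * (x - x₀)) ≤ u x ^ 2 / b x := by
      gcongr
    calc ε ^ 2 / M * (x - x₀)⁻¹ = ε ^ 2 / (M * (x - x₀)) := by
          field_simp
      _ ≤ u x ^ 2 / b x := h4
  -- the dominating function is integrable on Ioo x₀ (x₀+δ')
  have hI : IntegrableOn (fun x => ε ^ 2 / M * (x - x₀)⁻¹) (Ioo x₀ (x₀ + δ')) := by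
    refine Integrable.mono (hint.mono_set hsub)
      ((measurable_const.mul ((measurable_id.sub_const x₀).inv)).aestronglyMeasurable) ?_
    filter_upwards [ae_restrict_mem measurableSet_Ioo] with x hx
    have h1 := key x hx
    have hxI : x ∈ Icc (0:ℝ) 1 := ⟨(hsub hx).1.le, (hsub hx).2.le⟩
    have hbx : 0 < b x := hb_pos x hxI (ne_of_gt hx.1)
    have hxx₀ : 0 < x - x₀ := sub_pos.mpr hx.1
    have hnn : 0 ≤ ε ^ 2 / M * (x - x₀)⁻¹ := by positivity
    have hnn2 : 0 ≤ u x ^ 2 / b x := by positivity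
    rw [Real.norm_eq_abs, Real.norm_eq_abs, abs_of_nonneg hnn, abs_of_nonneg hnn2]
    exact h1
  have hk : ε ^ 2 / M ≠ 0 := by positivity
  have hI2 : IntegrableOn (fun x => (x - x₀)⁻¹) (Ioo x₀ (x₀ + δ')) := by
    have h := hI.const_mul (ε ^ 2 / M)⁻¹
    refine h.congr (ae_of_all _ fun x => ?_)
    exact inv_mul_cancel_left₀ hk _
  have hlt : x₀ < x₀ + δ' := by linarith
  have hIoc : IntegrableOn (fun x => (x - x₀)⁻¹) (Ioc x₀ (x₀ + δ')) :=
    (integrableOn_Ioc_iff_integrableOn_Ioo (hb := enorm_ne_top)).mpr hI2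
  have hII : IntervalIntegrable (fun x => (x - x₀)⁻¹) volume x₀ (x₀ + δ') :=
    (intervalIntegrable_iff_integrableOn_Ioc_of_le hlt.le).mpr hIoc
  rw [intervalIntegrable_sub_inv_iff] at hII
  rcases hII with h | h
  · linarith
  · exact h (by rw [uIcc_of_le hlt.le]; exact left_mem_Icc.mpr hlt.le)
end
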